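/- arXiv:2503.17571 — 2 statements merged into one kernel-verified Lean document; each statement's English description precedes it below -/
import Mathlib

section
/- The following identity of formal power series in q holds: ∑_{n ≥ 0} b₃(n)·qⁿ = ∏_{k=1}^{∞}(1+q^k) · ∑_{m ≥ 2} q^m/(1+q^m) − (q²/(1−q²)) · ∏_{k=3}^{∞}(1+q^k). -/
/-!
Statement 16:
`∑_{n ≥ 0} b₃(n) qⁿ = (−q;q)_∞ ∑_{m ≥ 2} q^m/(1+q^m) − (q²/(1−q²)) (−q³;q)_∞`
as formal power series in `q` over `ℚ`, where `b₃(n)` is the total number of cells of hook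
length 3 summed over all partitions of `n` into distinct parts.  The infinite products
`(−q^a;q)_∞ = ∏_{k=a}^{∞}(1+q^k)` and the infinite sum `∑_{m ≥ 2} q^m/(1+q^m)` are encoded
coefficientwise via their (stable) partial products/sums.
-/

/-- `λ'_j`: the number of parts of `π` that are at least `j` (the conjugate partition). -/
def conjPart (π : Multiset ℕ) (j : ℕ) : ℕ := (π.filter (fun p => j ≤ p)).card

/-- `λ_i`: the `i`-th largest part of `π` (1-indexed). -/
def rowPart (π : Multiset ℕ) (i : ℕ) : ℕ :=
  ((Finset.Icc 1 π.sum).filter (fun j => i ≤ conjPart π j)).card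

/-- The number of cells of hook length `t` in the Young diagram of `π`:
cells `(i,j)` with `1 ≤ i`, `1 ≤ j ≤ λ_i` and `λ_i + λ'_j − i − j + 1 = t`. -/
def hookCount (π : Multiset ℕ) (t : ℕ) : ℕ :=
  (((Finset.Icc 1 π.sum) ×ˢ (Finset.Icc 1 π.sum)).filter
    (fun c => c.2 ≤ rowPart π c.1 ∧ rowPart π c.1 + conjPart π c.2 + 1 = t + c.1 + c.2)).card

/-- `b₃(n)`: the total number of cells of hook length 3 summed over all partitions of `n`
into distinct parts. -/
def b3 (n : ℕ) : ℕ :=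
  ∑ π ∈ Nat.Partition.distincts n, hookCount π.parts 3

/-- The infinite product `∏_{k=a}^{∞}(1 + q^k)`, defined coefficientwise: the `n`-th
coefficient of the partial product `∏_{k=a}^{a+n}(1 + q^k)` is already stable. -/
noncomputable def prodOnePlusFrom (a : ℕ) : PowerSeries ℚ :=
  PowerSeries.mk fun n =>
    PowerSeries.coeff n
      (∏ k ∈ Finset.Icc a (a + n), (1 + (PowerSeries.X : PowerSeries ℚ) ^ k))

/-- The infinite sum `∑_{m ≥ 2} q^m/(1+q^m)`, defined coefficientwise: the `n`-th
coefficient of the partial sum over `2 ≤ m ≤ n + 1` is already stable. -/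
noncomputable def lambertSum : PowerSeries ℚ :=
  PowerSeries.mk fun n =>
    PowerSeries.coeff n
      (∑ m ∈ Finset.Icc 2 (n + 1),
        (PowerSeries.X : PowerSeries ℚ) ^ m * (1 + (PowerSeries.X : PowerSeries ℚ) ^ m)⁻¹)

section B3AuxAll
open PowerSeries Finset
open scoped Classical

namespace B3Aux

noncomputable section

/-- indicator power series of a set of naturals -/
def indicatorSeries (α : Type*) [Semiring α] (s : Set ℕ) : PowerSeries α :=
  PowerSeries.mk fun n => if n ∈ s then 1 else 0

variable {α : Type*}

theorem coeff_indicator (s : Set ℕ) [Semiring α] (n : ℕ) :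
    coeff (R := α) n (indicatorSeries _ s) = if n ∈ s then 1 else 0 :=
  coeff_mk _ _

theorem two_series (i : ℕ) (hi : 0 < i) [Semiring α] :
    1 + (X : PowerSeries α) ^ i = indicatorSeries α {0, i} := by
  obtain ⟨j, rfl⟩ := Nat.exists_eq_add_of_lt hi
  rw [zero_add]
  ext n
  simp only [coeff_indicator, coeff_one, coeff_X_pow, Set.mem_insert_iff, Set.mem_singleton_iff,
    map_add]
  cases' n with d
  · simp [(Nat.succ_ne_zero j).symm]
  · simp [Nat.succ_ne_zero d]

-- The main workhorse (copied from Archive/Wiedijk100Theorems/Partition.lean)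
theorem partialGF_prop (α : Type*) [CommSemiring α] (n : ℕ) (s : Finset ℕ) (hs : ∀ i ∈ s, 0 < i)
    (c : ℕ → Set ℕ) (hc : ∀ i, i ∉ s → 0 ∈ c i) :
    #{p : n.Partition | (∀ j, p.parts.count j ∈ c j) ∧ ∀ j ∈ p.parts, j ∈ s} =
      coeff (R := α) n (∏ i ∈ s, indicatorSeries α ((· * i) '' c i)) := by
  simp_rw [coeff_prod, coeff_indicator, prod_boole, sum_boole]
  apply congr_arg
  simp only [mem_univ, forall_true_left, not_and, not_forall, exists_prop,
    Set.mem_image, not_exists]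
  set φ : (a : Nat.Partition n) →
    a ∈ filter (fun p ↦ (∀ (j : ℕ), Multiset.count j p.parts ∈ c j) ∧ ∀ j ∈ p.parts, j ∈ s) univ →
    ℕ →₀ ℕ := fun p _ => {
      toFun := fun i => Multiset.count i p.parts • i
      support := Finset.filter (fun i => i ≠ 0) p.parts.toFinset
      mem_support_toFun := fun a => by
        simp only [smul_eq_mul, ne_eq, mul_eq_zero, Multiset.count_eq_zero]
        rw [not_or, not_not]
        simp only [Multiset.mem_toFinset, not_not, mem_filter] }
  refine Finset.card_bij φ ?_ ?_ ?_
  · intro a ha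
    simp only [φ, not_forall, not_exists, not_and, exists_prop, mem_filter]
    rw [mem_finsuppAntidiag]
    dsimp only [ne_eq, smul_eq_mul, id_eq, eq_mpr_eq_cast, le_eq_subset, Finsupp.coe_mk]
    simp only [mem_univ, forall_true_left, not_and, not_forall, exists_prop,
      mem_filter, true_and] at ha
    refine ⟨⟨?_, fun i ↦ ?_⟩, fun i _ ↦ ⟨a.parts.count i, ha.1 i, rfl⟩⟩
    · conv_rhs => simp [← a.parts_sum]
      rw [sum_multiset_count_of_subset _ s]
      · simp only [smul_eq_mul]
      · intro i
        simp only [Multiset.mem_toFinset, not_not, mem_filter]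
        apply ha.2
    · simp only [ne_eq, Multiset.mem_toFinset, not_not, mem_filter, and_imp]
      exact fun hi _ ↦ ha.2 i hi
  · intro p₁ hp₁ p₂ hp₂ h
    apply Nat.Partition.ext
    simp only [true_and, mem_univ, mem_filter] at hp₁ hp₂
    ext i
    simp only [φ, ne_eq, Multiset.mem_toFinset, not_not, smul_eq_mul, Finsupp.mk.injEq] at h
    by_cases hi : i = 0
    · rw [hi]
      rw [Multiset.count_eq_zero_of_notMem]
      · rw [Multiset.count_eq_zero_of_notMem]
        intro a; exact Nat.lt_irrefl 0 (hs 0 (hp₂.2 0 a))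
      intro a; exact Nat.lt_irrefl 0 (hs 0 (hp₁.2 0 a))
    · rw [← mul_left_inj' hi]
      rw [funext_iff] at h
      exact h.2 i
  · simp only [φ, mem_filter, mem_finsuppAntidiag, mem_univ, exists_prop, true_and, and_assoc]
    rintro f ⟨hf, hf₃, hf₄⟩
    have hf' : f ∈ finsuppAntidiag s n := mem_finsuppAntidiag.mpr ⟨hf, hf₃⟩
    simp only [mem_finsuppAntidiag] at hf'
    refine ⟨⟨∑ i ∈ s, Multiset.replicate (f i / i) i, ?_, ?_⟩, ?_, ?_, ?_⟩
    · intro i hi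
      simp only [exists_prop, Multiset.mem_sum, mem_map, Function.Embedding.coeFn_mk] at hi
      rcases hi with ⟨t, ht, z⟩
      apply hs
      rwa [Multiset.eq_of_mem_replicate z]
    · simp_rw [Multiset.sum_sum, Multiset.sum_replicate, Nat.nsmul_eq_mul]
      rw [← hf'.1]
      refine sum_congr rfl fun i hi => Nat.div_mul_cancel ?_
      rcases hf₄ i hi with ⟨w, _, hw₂⟩
      rw [← hw₂]
      exact dvd_mul_left _ _
    · intro i
      simp_rw [Multiset.count_sum', Multiset.count_replicate, sum_ite_eq']
      split_ifs with h
      · rcases hf₄ i h with ⟨w, hw₁, hw₂⟩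
        rwa [← hw₂, Nat.mul_div_cancel _ (hs i h)]
      · exact hc _ h
    · intro i hi
      rw [Multiset.mem_sum] at hi
      rcases hi with ⟨j, hj₁, hj₂⟩
      rwa [Multiset.eq_of_mem_replicate hj₂]
    · ext i
      simp_rw [Multiset.count_sum', Multiset.count_replicate, sum_ite_eq']
      simp only [ne_eq, Multiset.mem_toFinset, not_not, smul_eq_mul, ite_mul,
        zero_mul, Finsupp.coe_mk]
      split_ifs with h
      · apply Nat.div_mul_cancel
        rcases hf₄ i h with ⟨w, _, hw₂⟩
        apply Dvd.intro_left _ hw₂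
      · apply symm
        rw [← Finsupp.notMem_support_iff]
        exact notMem_mono hf'.2 h

/-- the key counting fact: coefficient of ∏_{k∈T}(1+X^k) counts distinct partitions with
parts in T. -/
theorem coeff_prod_one_add (n : ℕ) (T : Finset ℕ) (hT : ∀ i ∈ T, 0 < i) :
    (coeff (R := ℚ) n) (∏ k ∈ T, (1 + (X : ℚ⟦X⟧) ^ k)) =
      #{p : n.Partition | p.parts.Nodup ∧ ∀ j ∈ p.parts, j ∈ T} := by
  rw [show (∏ k ∈ T, (1 + (X : ℚ⟦X⟧) ^ k)) =
      ∏ i ∈ T, indicatorSeries ℚ ((· * i) '' {0, 1}) by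
    apply Finset.prod_congr rfl
    intro i hi
    rw [two_series i (hT i hi)]
    congr 1
    simp [Set.image_pair]]
  rw [← partialGF_prop ℚ n T hT (fun _ => {0, 1}) (fun _ _ => Or.inl rfl)]
  norm_cast
  apply congrArg Finset.card
  apply Finset.filter_congr
  intro p _
  simp only [Set.mem_insert_iff, Set.mem_singleton_iff]
  rw [and_congr_left_iff]
  intro _
  rw [Multiset.nodup_iff_count_le_one]
  constructor <;> intro h j <;> have := h j <;> omega

end
end B3Aux

namespace B3Aux2

variable {π : Multiset ℕ}

theorem conj_anti {j j' : ℕ} (h : j ≤ j') : conjPart π j' ≤ conjPart π j :=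
  Multiset.card_le_card (Multiset.monotone_filter_right π (fun _ hx => le_trans h hx))

theorem conj_split (a : ℕ) :
    conjPart π a = conjPart π (a + 1) + (π.filter (· = a)).card := by
  unfold conjPart
  rw [← Multiset.card_add, Multiset.filter_add_filter]
  have h1 : Multiset.filter (fun x => a + 1 ≤ x ∨ x = a) π = Multiset.filter (fun p => a ≤ p) π :=
    Multiset.filter_congr (fun x _ => by omega)
  have h2 : Multiset.filter (fun x => (a + 1 ≤ x) ∧ x = a) π = 0 :=
    Multiset.filter_eq_nil.2 (fun x _ => by omega)
  rw [h1, h2, Multiset.card_add]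
  simp

theorem card_filter_eq (hnd : π.Nodup) (a : ℕ) :
    (π.filter (· = a)).card = if a ∈ π then 1 else 0 := by
  rw [Multiset.filter_eq', Multiset.card_replicate]
  split_ifs with h
  · exact Multiset.count_eq_one_of_mem hnd h
  · exact Multiset.count_eq_zero_of_notMem h

theorem conj_succ_mem (hnd : π.Nodup) {a : ℕ} (h : a ∈ π) :
    conjPart π a = conjPart π (a + 1) + 1 := by
  rw [conj_split a, card_filter_eq hnd, if_pos h]

theorem conj_succ_not {a : ℕ} (h : a ∉ π) :
    conjPart π a = conjPart π (a + 1) := by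
  have := conj_split (π := π) a
  rw [Multiset.filter_eq'] at this
  simp [Multiset.count_eq_zero_of_notMem h] at this
  omega

theorem conj_zero_of_gt {j : ℕ} (h : π.sum < j) : conjPart π j = 0 := by
  unfold conjPart
  rw [Multiset.card_eq_zero, Multiset.filter_eq_nil]
  intro a ha
  have := Multiset.le_sum_of_mem ha
  omega

theorem conj_pos {m : ℕ} (h : m ∈ π) : 1 ≤ conjPart π m := by
  have h1 : m ∈ π.filter (fun p => m ≤ p) := Multiset.mem_filter.2 ⟨h, le_refl m⟩
  exact Multiset.card_pos_iff_exists_mem.2 ⟨m, h1⟩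

theorem conj_le_card (j : ℕ) : conjPart π j ≤ Multiset.card π :=
  Multiset.card_le_card (Multiset.filter_le _ π)

theorem card_le_sum (hpos : ∀ p ∈ π, 0 < p) : Multiset.card π ≤ π.sum := by
  induction π using Multiset.induction with
  | empty => simp
  | cons a s ih =>
    simp only [Multiset.card_cons, Multiset.sum_cons]
    have ha : 0 < a := hpos a (Multiset.mem_cons_self a s)
    have := ih (fun p hp => hpos p (Multiset.mem_cons_of_mem hp))
    omega

theorem conj_le_add (hnd : π.Nodup) (j d : ℕ) :
    conjPart π j ≤ conjPart π (j + d) + d := by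
  induction d with
  | zero => simp
  | succ d ih =>
    have h1 : conjPart π (j + d) ≤ conjPart π (j + d + 1) + 1 := by
      rw [conj_split (j + d), card_filter_eq hnd]
      split_ifs <;> omega
    have : j + (d+1) = j + d + 1 := by omega
    rw [this]
    omega

theorem row_conj (hnd : π.Nodup) {m : ℕ} (hm : m ∈ π) :
    rowPart π (conjPart π m) = m := by
  have hms : m ≤ π.sum := Multiset.le_sum_of_mem hm
  have hset : (Finset.Icc 1 π.sum).filter (fun j => conjPart π m ≤ conjPart π j)
      = Finset.Icc 1 m := by
    ext j
    simp only [Finset.mem_filter, Finset.mem_Icc]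
    constructor
    · rintro ⟨⟨h1, _⟩, hc⟩
      refine ⟨h1, ?_⟩
      by_contra hj
      have ha : conjPart π (m + 1) ≤ conjPart π (m+1) := le_refl _
      have h2 : conjPart π j ≤ conjPart π (m + 1) := conj_anti (by omega)
      have h3 := conj_succ_mem hnd hm
      omega
    · rintro ⟨h1, h2⟩
      exact ⟨⟨h1, le_trans h2 hms⟩, conj_anti h2⟩
  unfold rowPart
  rw [hset, Nat.card_Icc]
  omega

theorem row_mem (hnd : π.Nodup) {i : ℕ} (hi : 1 ≤ i) (hr : 1 ≤ rowPart π i) :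
    rowPart π i ∈ π ∧ conjPart π (rowPart π i) = i := by
  classical
  set S := (Finset.Icc 1 π.sum).filter (fun j => i ≤ conjPart π j) with hSdef
  have hScard : rowPart π i = S.card := rfl
  have hSne : S.Nonempty := Finset.card_pos.1 (by omega)
  set M := S.max' hSne with hMdef
  have hMS : M ∈ S := S.max'_mem hSne
  have hM1 : 1 ≤ M := (Finset.mem_Icc.1 (Finset.mem_filter.1 hMS).1).1
  have hMn : M ≤ π.sum := (Finset.mem_Icc.1 (Finset.mem_filter.1 hMS).1).2
  have hMc : i ≤ conjPart π M := (Finset.mem_filter.1 hMS).2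
  have hSeq : S = Finset.Icc 1 M := by
    ext j
    simp only [Finset.mem_Icc]
    constructor
    · intro hj
      exact ⟨(Finset.mem_Icc.1 (Finset.mem_filter.1 hj).1).1, S.le_max' j hj⟩
    · rintro ⟨h1, h2⟩
      refine Finset.mem_filter.2 ⟨Finset.mem_Icc.2 ⟨h1, le_trans h2 hMn⟩, le_trans hMc (conj_anti h2)⟩
  have hrow : rowPart π i = M := by rw [hScard, hSeq, Nat.card_Icc]; omega
  have hconjsucc : conjPart π (M + 1) < i := by
    by_contra h
    push_neg at h
    by_cases hn : M + 1 ≤ π.sum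
    · have : M + 1 ∈ S := Finset.mem_filter.2 ⟨Finset.mem_Icc.2 ⟨by omega, hn⟩, h⟩
      have := S.le_max' _ this
      omega
    · have := conj_zero_of_gt (π := π) (j := M+1) (by omega)
      omega
  have hmem : M ∈ π := by
    by_contra hmem
    have := conj_succ_not (π := π) hmem
    omega
  have := conj_succ_mem hnd hmem
  rw [hrow]
  exact ⟨hmem, by omega⟩

/-- The key combinatorial lemma: cells of hook length 3 in a distinct partition. -/
theorem hook3 (hnd : π.Nodup) (hpos : ∀ p ∈ π, 0 < p) :
    hookCount π 3 = #(π.toFinset.filter fun m => (m - 1) ∈ π)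
      + #(π.toFinset.filter fun m => 3 ≤ m ∧ (m-1) ∉ π ∧ (m-2) ∉ π) := by
  classical
  have hgood : hookCount π 3 = #(π.toFinset.filter fun m =>
      ((m - 1) ∈ π) ∨ (3 ≤ m ∧ (m-1) ∉ π ∧ (m-2) ∉ π)) := by
    unfold hookCount
    apply Finset.card_bij (fun c _ => rowPart π c.1)
    -- maps into
    · rintro ⟨i, j⟩ hc
      simp only [Finset.mem_filter, Finset.mem_product, Finset.mem_Icc] at hc
      obtain ⟨⟨⟨hi1, hin⟩, hj1, hjn⟩, hjr, heq⟩ := hc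
      have hr1 : 1 ≤ rowPart π i := le_trans hj1 hjr
      obtain ⟨hmem, hconj⟩ := row_mem hnd hi1 hr1
      set m := rowPart π i with hm
      simp only [Finset.mem_filter, Multiset.mem_toFinset]
      refine ⟨hmem, ?_⟩
      -- analyze j
      have hge : conjPart π m ≤ conjPart π j := conj_anti hjr
      have hle : conjPart π j ≤ conjPart π (j + (m - j)) + (m - j) := conj_le_add hnd j (m - j)
      rw [show j + (m - j) = m by omega] at hle
      have hj_cases : j = m - 1 ∨ j = m - 2 := by omega
      have hsplit1 : conjPart π (m-1) = conjPart π m + (if m-1 ∈ π then 1 else 0) := by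
        have := conj_split (π := π) (m-1)
        rw [card_filter_eq hnd] at this
        rw [show m - 1 + 1 = m by omega] at this
        exact this
      rcases hj_cases with rfl | rfl
      · left
        by_cases h1 : m - 1 ∈ π
        · exact h1
        · simp [h1] at hsplit1; omega
      · right
        have hm3 : 3 ≤ m := by omega
        have hsplit2 : conjPart π (m-2) = conjPart π (m-1) + (if m-2 ∈ π then 1 else 0) := by
          have := conj_split (π := π) (m-2)
          rw [card_filter_eq hnd] at this
          rw [show m - 2 + 1 = m - 1 by omega] at this
          exact this
        refine ⟨hm3, ?_, ?_⟩
        · by_cases h1 : m - 1 ∈ π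
          · simp [h1] at hsplit1
            by_cases h2 : m-2 ∈ π <;> simp [h2] at hsplit2 <;> omega
          · exact h1
        · by_cases h2 : m - 2 ∈ π
          · by_cases h1 : m-1 ∈ π <;> simp [h1] at hsplit1 <;>
              simp [h2] at hsplit2 <;> omega
          · exact h2
    -- injective
    · rintro ⟨i, j⟩ hc ⟨i', j'⟩ hc' hij
      simp only [Finset.mem_filter, Finset.mem_product, Finset.mem_Icc] at hc hc'
      simp only at hij
      obtain ⟨⟨⟨hi1, hin⟩, hj1, hjn⟩, hjr, heq⟩ := hc
      obtain ⟨⟨⟨hi1', hin'⟩, hj1', hjn'⟩, hjr', heq'⟩ := hc'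
      obtain ⟨hmem, hconj⟩ := row_mem hnd hi1 (le_trans hj1 hjr)
      obtain ⟨hmem', hconj'⟩ := row_mem hnd hi1' (le_trans hj1' hjr')
      have hii : i = i' := by rw [← hconj, ← hconj', hij]
      subst hii
      rw [← hij] at hjr' heq'
      have hjj : j = j' := by
        set m := rowPart π i with hm
        have hge : conjPart π m ≤ conjPart π j := conj_anti hjr
        have hle : conjPart π j ≤ conjPart π (j + (m - j)) + (m - j) := conj_le_add hnd j (m-j)
        rw [show j + (m - j) = m by omega] at hle
        have hge' : conjPart π m ≤ conjPart π j' := conj_anti hjr'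
        have hle' : conjPart π j' ≤ conjPart π (j' + (m - j')) + (m - j') :=
          conj_le_add hnd j' (m-j')
        rw [show j' + (m - j') = m by omega] at hle'
        have hj_cases : j = m - 1 ∨ j = m - 2 := by omega
        have hj_cases' : j' = m - 1 ∨ j' = m - 2 := by omega
        have hanti1 : conjPart π (m-1) ≤ conjPart π (m-2) := conj_anti (by omega)
        have hsplit1 : conjPart π (m-1) = conjPart π m + (if m-1 ∈ π then 1 else 0) := by
          have h := conj_split (π := π) (m-1)
          rw [card_filter_eq hnd] at h
          rw [show m - 1 + 1 = m by omega] at h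
          exact h
        have hm2 : 2 ≤ m := by omega
        have hsplit2 : conjPart π (m-2) = conjPart π (m-1) + (if m-2 ∈ π then 1 else 0) := by
          have h := conj_split (π := π) (m-2)
          rw [card_filter_eq hnd] at h
          rw [show m - 2 + 1 = m - 1 by omega] at h
          exact h
        by_cases h1 : m - 1 ∈ π <;> by_cases h2 : m - 2 ∈ π <;>
          simp only [h1, h2, if_true, if_false] at hsplit1 hsplit2 <;>
          rcases hj_cases with rfl | rfl <;> rcases hj_cases' with rfl | rfl <;> omega
      rw [Prod.ext_iff]
      exact ⟨rfl, hjj⟩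
    -- surjective
    · intro m hmf
      simp only [Finset.mem_filter, Multiset.mem_toFinset] at hmf
      obtain ⟨hmem, hgood⟩ := hmf
      have hrow := row_conj hnd hmem
      have hms : m ≤ π.sum := Multiset.le_sum_of_mem hmem
      have hcpos : 1 ≤ conjPart π m := conj_pos hmem
      have hcn : conjPart π m ≤ π.sum :=
        le_trans (conj_le_card m) (card_le_sum hpos)
      have hm1 : 1 ≤ m := hpos m hmem
      rcases hgood with hB | ⟨hm3, hA1, hA2⟩
      · -- type B cell : (conj m, m-1)
        have hm2 : 2 ≤ m := by
          have := hpos (m-1) hB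
          omega
        refine ⟨(conjPart π m, m - 1), ?_, hrow⟩
        simp only [Finset.mem_filter, Finset.mem_product, Finset.mem_Icc]
        have hsp : conjPart π (m-1) = conjPart π m + 1 := by
          have := conj_succ_mem hnd hB
          rw [show m - 1 + 1 = m by omega] at this
          omega
        exact ⟨⟨⟨hcpos, hcn⟩, by omega, by omega⟩, by rw [hrow]; omega,
          by rw [hrow, hsp]; omega⟩
      · -- type A cell : (conj m, m-2)
        refine ⟨(conjPart π m, m - 2), ?_, hrow⟩
        simp only [Finset.mem_filter, Finset.mem_product, Finset.mem_Icc]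
        have hsp1 : conjPart π (m-1) = conjPart π m := by
          have := conj_succ_not (π := π) hA1
          rw [show m - 1 + 1 = m by omega] at this
          omega
        have hsp2 : conjPart π (m-2) = conjPart π (m-1) := by
          have := conj_succ_not (π := π) hA2
          rw [show m - 2 + 1 = m - 1 by omega] at this
          omega
        exact ⟨⟨⟨hcpos, hcn⟩, by omega, by omega⟩, by rw [hrow]; omega,
          by rw [hrow, hsp2, hsp1]; omega⟩
  rw [hgood, Finset.filter_or, Finset.card_union_of_disjoint]
  rw [Finset.disjoint_left]
  intro a ha hb
  simp only [Finset.mem_filter] at ha hb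
  exact hb.2.2.1 ha.2

end B3Aux2

namespace B3Aux3

theorem coeff_eq_of_dvd {f g : ℚ⟦X⟧} {n : ℕ} (h : (X : ℚ⟦X⟧)^(n+1) ∣ f - g) :
    coeff n f = coeff n g := by
  rw [PowerSeries.X_pow_dvd_iff] at h
  have := h n (by omega)
  rw [map_sub, sub_eq_zero] at this
  exact this

theorem prod_mod (N : ℕ) (T : Finset ℕ) :
    (X : ℚ⟦X⟧)^N ∣ (∏ k ∈ T, (1 + X^k)) - ∏ k ∈ T.filter (· < N), (1 + X^k) := by
  classical
  induction T using Finset.induction with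
  | empty => simp
  | insert a T ha ih =>
    by_cases h : a < N
    · rw [Finset.filter_insert, if_pos h, Finset.prod_insert ha,
        Finset.prod_insert (fun hmem => ha (Finset.mem_of_mem_filter a hmem))]
      obtain ⟨c, hc⟩ := ih
      exact ⟨(1 + X^a) * c, by linear_combination (1 + (X:ℚ⟦X⟧)^a) * hc⟩
    · rw [Finset.filter_insert, if_neg h, Finset.prod_insert ha]
      have h2 : (X : ℚ⟦X⟧)^N ∣ X^a * ∏ k ∈ T, (1 + X^k) :=
        Dvd.dvd.mul_right (pow_dvd_pow X (by omega)) _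
      have h3 := dvd_add ih h2
      have e : ((∏ k ∈ T, (1+(X:ℚ⟦X⟧)^k)) - ∏ k ∈ T.filter (· < N), (1 + X^k))
          + X^a * ∏ k ∈ T, (1 + X^k)
          = (1 + X^a) * (∏ k ∈ T, (1+X^k)) - ∏ k ∈ T.filter (· < N), (1 + X^k) := by ring
      rwa [e] at h3

theorem sum_mod (N : ℕ) (T : Finset ℕ) :
    (X : ℚ⟦X⟧)^N ∣ (∑ m ∈ T, X^m * (1 + X^m)⁻¹)
      - ∑ m ∈ T.filter (· < N), X^m * (1 + X^m)⁻¹ := by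
  classical
  rw [← Finset.sum_filter_add_sum_filter_not T (· < N), add_sub_cancel_left]
  apply Finset.dvd_sum
  intro m hm
  simp only [Finset.mem_filter, not_lt] at hm
  exact Dvd.dvd.mul_right (pow_dvd_pow X hm.2) _

theorem prodFrom_sub (a N K : ℕ) (hK : a + N ≤ K + 1) :
    (X : ℚ⟦X⟧)^N ∣ prodOnePlusFrom a - ∏ k ∈ Finset.Icc a K, (1 + X^k) := by
  rw [PowerSeries.X_pow_dvd_iff]
  intro i hi
  rw [map_sub, sub_eq_zero]
  show coeff i (prodOnePlusFrom a) = _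
  rw [prodOnePlusFrom, coeff_mk]
  have h1 := prod_mod (i+1) (Finset.Icc a (a+i))
  have h2 := prod_mod (i+1) (Finset.Icc a K)
  have hfil : (Finset.Icc a (a+i)).filter (· < i+1) = (Finset.Icc a K).filter (· < i+1) := by
    ext x
    simp only [Finset.mem_filter, Finset.mem_Icc]
    omega
  rw [coeff_eq_of_dvd h1, coeff_eq_of_dvd h2, hfil]

theorem lambert_sub (N K : ℕ) (hK : N ≤ K + 1) :
    (X : ℚ⟦X⟧)^N ∣ lambertSum - ∑ m ∈ Finset.Icc 2 K, X^m * (1 + X^m)⁻¹ := by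
  rw [PowerSeries.X_pow_dvd_iff]
  intro i hi
  rw [map_sub, sub_eq_zero]
  show coeff i lambertSum = _
  rw [lambertSum, coeff_mk]
  have h1 := sum_mod (i+1) (Finset.Icc 2 (i+1))
  have h2 := sum_mod (i+1) (Finset.Icc 2 K)
  have hfil : (Finset.Icc 2 (i+1)).filter (· < i+1) = (Finset.Icc 2 K).filter (· < i+1) := by
    ext x
    simp only [Finset.mem_filter, Finset.mem_Icc]
    omega
  rw [coeff_eq_of_dvd h1, coeff_eq_of_dvd h2, hfil]

theorem one_add_unit (m : ℕ) (hm : 0 < m) : (1 + (X:ℚ⟦X⟧)^m) * (1 + X^m)⁻¹ = 1 := by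
  apply PowerSeries.mul_inv_cancel
  have : constantCoeff ((X:ℚ⟦X⟧)^m) = 0 := by
    rw [map_pow, constantCoeff_X, zero_pow (by omega)]
  rw [map_add, map_one, this]
  norm_num

theorem geom_unit : (1 - (X:ℚ⟦X⟧)^2) * (1 - X^2)⁻¹ = 1 := by
  apply PowerSeries.mul_inv_cancel
  have : constantCoeff ((X:ℚ⟦X⟧)^2) = 0 := by
    rw [map_pow, constantCoeff_X, zero_pow (by omega)]
  rw [map_sub, map_one, this]
  norm_num

theorem prod_erase_cancel {T : Finset ℕ} {m : ℕ} (hm : m ∈ T) (h0 : 0 < m) :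
    (∏ k ∈ T, (1 + (X:ℚ⟦X⟧)^k)) * (1 + X^m)⁻¹ = ∏ k ∈ T.erase m, (1 + X^k) := by
  rw [← Finset.mul_prod_erase T _ hm]
  have := one_add_unit m h0
  calc (1 + (X:ℚ⟦X⟧)^m) * (∏ k ∈ T.erase m, (1 + X^k)) * (1 + X^m)⁻¹
      = ((1 + X^m) * (1 + X^m)⁻¹) * ∏ k ∈ T.erase m, (1 + X^k) := by ring
    _ = ∏ k ∈ T.erase m, (1 + X^k) := by rw [this, one_mul]

/-- The finite telescoping identity. -/
theorem star (K M : ℕ) (h2 : 2 ≤ M) (hMK : M ≤ K) :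
    ∑ m ∈ Finset.Icc 2 M, (X:ℚ⟦X⟧)^m * ∏ k ∈ (Finset.Icc 1 K).erase m, (1 + X^k)
    = (∑ m ∈ Finset.Icc 2 M,
        (X:ℚ⟦X⟧)^(2*m-1) * ∏ k ∈ ((Finset.Icc 1 K).erase m).erase (m-1), (1 + X^k))
      + (∑ m ∈ Finset.Icc 3 M,
        (X:ℚ⟦X⟧)^m * ∏ k ∈ (((Finset.Icc 1 K).erase m).erase (m-1)).erase (m-2), (1 + X^k))
      + X^2 * (1 - X^2)⁻¹ * ∏ k ∈ Finset.Icc 3 K, (1 + X^k)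
      - X^(2*M) * (1 - X^2)⁻¹ * ∏ k ∈ ((Finset.Icc 1 K).erase M).erase (M-1), (1 + X^k) := by
  induction M, h2 using Nat.le_induction with
  | base =>
    have hB2 : ((Finset.Icc 1 K).erase 2).erase 1 = Finset.Icc 3 K := by
      ext x
      simp only [Finset.mem_erase, Finset.mem_Icc]
      omega
    have h1mem : (1:ℕ) ∈ (Finset.Icc 1 K).erase 2 := by
      simp only [Finset.mem_erase, Finset.mem_Icc]
      omega
    have hE2 : ∏ k ∈ (Finset.Icc 1 K).erase 2, (1 + (X:ℚ⟦X⟧)^k)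
        = (1 + X^1) * ∏ k ∈ Finset.Icc 3 K, (1 + X^k) := by
      rw [← hB2]
      exact (Finset.mul_prod_erase _ _ h1mem).symm
    simp only [Finset.Icc_self, Finset.sum_singleton, show Finset.Icc 3 2 = ∅ from rfl,
      Finset.sum_empty, add_zero, hB2, hE2]
    norm_num
    linear_combination (-((X:ℚ⟦X⟧)^2 * ∏ k ∈ Finset.Icc 3 K, (1 + X^k))) * geom_unit
  | succ M h2 ih =>
    have hMK' : M ≤ K := by omega
    rw [Finset.sum_Icc_succ_top (by omega : 2 ≤ M + 1),
        Finset.sum_Icc_succ_top (by omega : 2 ≤ M + 1),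
        Finset.sum_Icc_succ_top (by omega : 3 ≤ M + 1), ih hMK']
    obtain ⟨k, rfl⟩ : ∃ k, M = k + 2 := ⟨M - 2, by omega⟩
    simp only [show k+2+1 = k+3 from by omega, show k+3-1 = k+2 from by omega,
      show k+3-2 = k+1 from by omega, show k+2-1 = k+1 from by omega,
      show 2*(k+3)-1 = 2*k+5 from by omega, show 2*(k+2) = 2*k+4 from by omega,
      show 2*(k+3) = 2*k+6 from by omega, show 2*k+6-1 = 2*k+5 from by omega]
    set C := (((Finset.Icc 1 K).erase (k+3)).erase (k+2)).erase (k+1) with hC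
    have hMem : k+2 ∈ (Finset.Icc 1 K).erase (k+3) := by
      simp only [Finset.mem_erase, Finset.mem_Icc]; omega
    have hEB : ∏ j ∈ (Finset.Icc 1 K).erase (k+3), (1 + (X:ℚ⟦X⟧)^j)
        = (1 + X^(k+2)) * ∏ j ∈ ((Finset.Icc 1 K).erase (k+3)).erase (k+2), (1 + X^j) :=
      (Finset.mul_prod_erase _ _ hMem).symm
    have hMem2 : k+1 ∈ ((Finset.Icc 1 K).erase (k+3)).erase (k+2) := by
      simp only [Finset.mem_erase, Finset.mem_Icc]; omega
    have hBA : ∏ j ∈ ((Finset.Icc 1 K).erase (k+3)).erase (k+2), (1 + (X:ℚ⟦X⟧)^j)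
        = (1 + X^(k+1)) * ∏ j ∈ C, (1 + X^j) :=
      (Finset.mul_prod_erase _ _ hMem2).symm
    have hMem3 : k+3 ∈ ((Finset.Icc 1 K).erase (k+2)).erase (k+1) := by
      simp only [Finset.mem_erase, Finset.mem_Icc]; omega
    have hCalt : (((Finset.Icc 1 K).erase (k+2)).erase (k+1)).erase (k+3) = C := by
      rw [hC]
      ext x
      simp only [Finset.mem_erase, Finset.mem_Icc]
      omega
    have hBM : ∏ j ∈ ((Finset.Icc 1 K).erase (k+2)).erase (k+1), (1 + (X:ℚ⟦X⟧)^j)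
        = (1 + X^(k+3)) * ∏ j ∈ C, (1 + X^j) := by
      have h := (Finset.mul_prod_erase _ (fun j => 1 + (X:ℚ⟦X⟧)^j) hMem3).symm
      rw [hCalt] at h
      exact h
    rw [hEB, hBA, hBM]
    linear_combination (-((X:ℚ⟦X⟧)^(2*k+4) * ∏ j ∈ C, (1 + X^j))) * geom_unit

/-- Extraction of the n-th coefficient of the RHS of the main theorem. -/
theorem coeff_rhs (n : ℕ) (hn : 1 ≤ n) :
    coeff n (prodOnePlusFrom 1 * lambertSum
        - (X:ℚ⟦X⟧)^2 * (1 - (X:ℚ⟦X⟧)^2)⁻¹ * prodOnePlusFrom 3)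
    = (∑ m ∈ Finset.Icc 2 (n+1), coeff n ((X:ℚ⟦X⟧)^(2*m-1) *
        ∏ k ∈ ((Finset.Icc 1 (n+3)).erase m).erase (m-1), (1 + X^k)))
    + ∑ m ∈ Finset.Icc 3 (n+1), coeff n ((X:ℚ⟦X⟧)^m *
        ∏ k ∈ (((Finset.Icc 1 (n+3)).erase m).erase (m-1)).erase (m-2), (1 + X^k)) := by
  have step1 : coeff n (prodOnePlusFrom 1 * lambertSum
        - (X:ℚ⟦X⟧)^2 * (1 - (X:ℚ⟦X⟧)^2)⁻¹ * prodOnePlusFrom 3)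
      = coeff n ((∏ k ∈ Finset.Icc 1 (n+3), (1 + (X:ℚ⟦X⟧)^k))
          * (∑ m ∈ Finset.Icc 2 (n+1), (X:ℚ⟦X⟧)^m * (1 + X^m)⁻¹)
        - (X:ℚ⟦X⟧)^2 * (1 - (X:ℚ⟦X⟧)^2)⁻¹ * ∏ k ∈ Finset.Icc 3 (n+3), (1 + X^k)) := by
    apply coeff_eq_of_dvd
    obtain ⟨c1, hc1⟩ := prodFrom_sub 1 (n+1) (n+3) (by omega)
    obtain ⟨c3, hc3⟩ := prodFrom_sub 3 (n+1) (n+3) (by omega)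
    obtain ⟨cL, hcL⟩ := lambert_sub (n+1) (n+1) (by omega)
    refine ⟨c1 * (∑ m ∈ Finset.Icc 2 (n+1), (X:ℚ⟦X⟧)^m * (1 + X^m)⁻¹)
        + (∏ k ∈ Finset.Icc 1 (n+3), (1 + (X:ℚ⟦X⟧)^k)) * cL + (X:ℚ⟦X⟧)^(n+1) * c1 * cL
        - (X:ℚ⟦X⟧)^2 * (1 - (X:ℚ⟦X⟧)^2)⁻¹ * c3, ?_⟩
    linear_combination lambertSum * hc1
      + (∏ k ∈ Finset.Icc 1 (n+3), (1 + (X:ℚ⟦X⟧)^k)) * hcL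
      + (X:ℚ⟦X⟧)^(n+1) * c1 * hcL - (X:ℚ⟦X⟧)^2 * (1 - (X:ℚ⟦X⟧)^2)⁻¹ * hc3
  rw [step1]
  have hPL : (∏ k ∈ Finset.Icc 1 (n+3), (1 + (X:ℚ⟦X⟧)^k))
      * (∑ m ∈ Finset.Icc 2 (n+1), (X:ℚ⟦X⟧)^m * (1 + X^m)⁻¹)
      = ∑ m ∈ Finset.Icc 2 (n+1), (X:ℚ⟦X⟧)^m
          * ∏ k ∈ (Finset.Icc 1 (n+3)).erase m, (1 + X^k) := by
    rw [Finset.mul_sum]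
    apply Finset.sum_congr rfl
    intro m hm
    simp only [Finset.mem_Icc] at hm
    have hmem : m ∈ Finset.Icc 1 (n+3) := Finset.mem_Icc.2 (by omega)
    rw [show (∏ k ∈ Finset.Icc 1 (n+3), (1 + (X:ℚ⟦X⟧)^k)) * ((X:ℚ⟦X⟧)^m * (1 + X^m)⁻¹)
        = (X:ℚ⟦X⟧)^m * ((∏ k ∈ Finset.Icc 1 (n+3), (1 + (X:ℚ⟦X⟧)^k)) * (1 + X^m)⁻¹) by ring,
      prod_erase_cancel hmem (by omega)]
  rw [hPL, star (n+3) (n+1) (by omega) (by omega)]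
  have hsimp : (∑ m ∈ Finset.Icc 2 (n+1),
        (X:ℚ⟦X⟧)^(2*m-1) * ∏ k ∈ ((Finset.Icc 1 (n+3)).erase m).erase (m-1), (1 + X^k))
      + (∑ m ∈ Finset.Icc 3 (n+1),
        (X:ℚ⟦X⟧)^m * ∏ k ∈ (((Finset.Icc 1 (n+3)).erase m).erase (m-1)).erase (m-2), (1 + X^k))
      + X^2 * (1 - X^2)⁻¹ * ∏ k ∈ Finset.Icc 3 (n+3), (1 + X^k)
      - X^(2*(n+1)) * (1 - X^2)⁻¹
          * ∏ k ∈ ((Finset.Icc 1 (n+3)).erase (n+1)).erase (n+1-1), (1 + X^k)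
      - (X:ℚ⟦X⟧)^2 * (1 - (X:ℚ⟦X⟧)^2)⁻¹ * ∏ k ∈ Finset.Icc 3 (n+3), (1 + X^k)
      = (∑ m ∈ Finset.Icc 2 (n+1),
        (X:ℚ⟦X⟧)^(2*m-1) * ∏ k ∈ ((Finset.Icc 1 (n+3)).erase m).erase (m-1), (1 + X^k))
      + (∑ m ∈ Finset.Icc 3 (n+1),
        (X:ℚ⟦X⟧)^m * ∏ k ∈ (((Finset.Icc 1 (n+3)).erase m).erase (m-1)).erase (m-2), (1 + X^k))
      - X^(2*(n+1)) * (1 - X^2)⁻¹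
          * ∏ k ∈ ((Finset.Icc 1 (n+3)).erase (n+1)).erase (n+1-1), (1 + X^k) := by ring
  rw [hsimp, map_sub, map_add, map_sum, map_sum]
  have hF : coeff n ((X:ℚ⟦X⟧)^(2*(n+1)) * (1 - X^2)⁻¹
      * ∏ k ∈ ((Finset.Icc 1 (n+3)).erase (n+1)).erase (n+1-1), (1 + X^k)) = 0 := by
    have hdvd : (X:ℚ⟦X⟧)^(n+1) ∣ (X:ℚ⟦X⟧)^(2*(n+1)) * (1 - X^2)⁻¹
        * ∏ k ∈ ((Finset.Icc 1 (n+3)).erase (n+1)).erase (n+1-1), (1 + X^k) :=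
      Dvd.dvd.mul_right (Dvd.dvd.mul_right (pow_dvd_pow X (by omega)) _) _
    exact PowerSeries.X_pow_dvd_iff.1 hdvd n (by omega)
  rw [hF]
  ring

end B3Aux3

namespace B3Aux4
-- real work
theorem mem_distincts {n : ℕ} {p : n.Partition} :
    p ∈ Nat.Partition.distincts n ↔ p.parts.Nodup := by
  simp [Nat.Partition.distincts]

theorem remove_step (n a : ℕ) (h0 : 0 < a) (han : a ≤ n) (Pos Neg : Finset ℕ)
    (haP : a ∉ Pos) (haN : a ∉ Neg) :
    #((Nat.Partition.distincts n).filter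
        (fun p => a ∈ p.parts ∧ (∀ s ∈ Pos, s ∈ p.parts) ∧ ∀ s ∈ Neg, s ∉ p.parts))
    = #((Nat.Partition.distincts (n-a)).filter
        (fun p => (∀ s ∈ Pos, s ∈ p.parts) ∧ ∀ s ∈ insert a Neg, s ∉ p.parts)) := by
  apply Finset.card_bij (i := fun p hp =>
    ({ parts := p.parts.erase a
       parts_pos := fun hi => p.parts_pos (Multiset.mem_of_mem_erase hi)
       parts_sum := by
         have hmem : a ∈ p.parts := (Finset.mem_filter.1 hp).2.1
         have hc := Multiset.cons_erase hmem
         have h2 : a + (p.parts.erase a).sum = n := by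
           rw [← Multiset.sum_cons, hc, p.parts_sum]
         omega } : Nat.Partition (n - a)))
  · intro p hp
    have h := Finset.mem_filter.1 hp
    have hpd := mem_distincts.1 h.1
    obtain ⟨hmem, hPos, hNeg⟩ := h.2
    refine Finset.mem_filter.2 ⟨mem_distincts.2 (hpd.erase a), ?_, ?_⟩
    · intro s hs
      exact (Multiset.mem_erase_of_ne (by rintro rfl; exact haP hs)).2 (hPos s hs)
    · intro s hs
      rcases Finset.mem_insert.1 hs with rfl | hs
      · exact hpd.notMem_erase
      · exact fun hcon => hNeg s hs (Multiset.mem_of_mem_erase hcon)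
  · intro p₁ hp₁ p₂ hp₂ h
    have h' : p₁.parts.erase a = p₂.parts.erase a := congrArg Nat.Partition.parts h
    have hm₁ : a ∈ p₁.parts := (Finset.mem_filter.1 hp₁).2.1
    have hm₂ : a ∈ p₂.parts := (Finset.mem_filter.1 hp₂).2.1
    apply Nat.Partition.ext
    rw [← Multiset.cons_erase hm₁, ← Multiset.cons_erase hm₂, h']
  · intro q hq
    have h := Finset.mem_filter.1 hq
    have hqd := mem_distincts.1 h.1
    obtain ⟨hPos, hNeg⟩ := h.2
    have haq : a ∉ q.parts := hNeg a (Finset.mem_insert_self a Neg)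
    refine ⟨⟨a ::ₘ q.parts, ?_, ?_⟩, ?_, ?_⟩
    · intro i hi
      rcases Multiset.mem_cons.1 hi with rfl | hi
      · exact h0
      · exact q.parts_pos hi
    · rw [Multiset.sum_cons, q.parts_sum]; omega
    · refine Finset.mem_filter.2 ⟨mem_distincts.2 (Multiset.nodup_cons.2 ⟨haq, hqd⟩),
        Multiset.mem_cons_self a _, ?_, ?_⟩
      · exact fun s hs => Multiset.mem_cons_of_mem (hPos s hs)
      · intro s hs hcon
        rcases Multiset.mem_cons.1 hcon with rfl | hcon
        · exact haN hs
        · exact hNeg s (Finset.mem_insert_of_mem hs) hcon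
    · apply Nat.Partition.ext
      simp only [Multiset.erase_cons_head]

theorem stepB (n m : ℕ) (hm : 2 ≤ m) (h : 2*m-1 ≤ n) :
    #((Nat.Partition.distincts n).filter (fun p => m ∈ p.parts ∧ (m-1) ∈ p.parts))
    = #((Nat.Partition.distincts (n-(2*m-1))).filter
        (fun p => m ∉ p.parts ∧ (m-1) ∉ p.parts)) := by
  have e1 : #((Nat.Partition.distincts n).filter (fun p => m ∈ p.parts ∧ (m-1) ∈ p.parts))
      = #((Nat.Partition.distincts n).filter
          (fun p => m ∈ p.parts ∧ (∀ s ∈ ({m-1} : Finset ℕ), s ∈ p.parts)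
            ∧ ∀ s ∈ (∅ : Finset ℕ), s ∉ p.parts)) := by
    apply congrArg
    apply Finset.filter_congr
    intro p _
    simp
  rw [e1, remove_step n m (by omega) (by omega) {m-1} ∅ (by simp; omega) (by simp)]
  have e2 : #((Nat.Partition.distincts (n-m)).filter
        (fun p => (∀ s ∈ ({m-1} : Finset ℕ), s ∈ p.parts)
          ∧ ∀ s ∈ insert m (∅ : Finset ℕ), s ∉ p.parts))
      = #((Nat.Partition.distincts (n-m)).filter
          (fun p => (m-1) ∈ p.parts ∧ (∀ s ∈ (∅ : Finset ℕ), s ∈ p.parts)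
            ∧ ∀ s ∈ ({m} : Finset ℕ), s ∉ p.parts)) := by
    apply congrArg
    apply Finset.filter_congr
    intro p _
    simp
    try tauto
  rw [e2, remove_step (n-m) (m-1) (by omega) (by omega) ∅ {m} (by simp) (by simp; omega)]
  rw [show n - m - (m-1) = n - (2*m-1) from by omega]
  apply congrArg
  apply Finset.filter_congr
  intro p _
  simp
  try tauto

theorem stepA (n m : ℕ) (hm : 3 ≤ m) (h : m ≤ n) :
    #((Nat.Partition.distincts n).filter
        (fun p => m ∈ p.parts ∧ (m-1) ∉ p.parts ∧ (m-2) ∉ p.parts))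
    = #((Nat.Partition.distincts (n-m)).filter
        (fun p => m ∉ p.parts ∧ (m-1) ∉ p.parts ∧ (m-2) ∉ p.parts)) := by
  have e1 : #((Nat.Partition.distincts n).filter
        (fun p => m ∈ p.parts ∧ (m-1) ∉ p.parts ∧ (m-2) ∉ p.parts))
      = #((Nat.Partition.distincts n).filter
          (fun p => m ∈ p.parts ∧ (∀ s ∈ (∅ : Finset ℕ), s ∈ p.parts)
            ∧ ∀ s ∈ ({m-1, m-2} : Finset ℕ), s ∉ p.parts)) := by
    apply congrArg
    apply Finset.filter_congr
    intro p _
    simp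
    try tauto
  rw [e1, remove_step n m (by omega) h ∅ {m-1, m-2} (by simp) (by simp; omega)]
  apply congrArg
  apply Finset.filter_congr
  intro p _
  simp
  try tauto

theorem countB_coeff (n m : ℕ) (hm : 2 ≤ m) (hmn : m ≤ n + 1) :
    ((#((Nat.Partition.distincts n).filter
        (fun p => m ∈ p.parts ∧ (m-1) ∈ p.parts)) : ℕ) : ℚ)
    = coeff n ((X:ℚ⟦X⟧)^(2*m-1)
        * ∏ k ∈ ((Finset.Icc 1 (n+3)).erase m).erase (m-1), (1 + X^k)) := by
  by_cases h : 2*m-1 ≤ n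
  · rw [stepB n m hm h, PowerSeries.coeff_X_pow_mul', if_pos h,
      B3Aux.coeff_prod_one_add _ _ (fun i hi => by
        have h1 := Finset.mem_of_mem_erase hi
        have h2 := Finset.mem_of_mem_erase h1
        have := (Finset.mem_Icc.1 h2).1
        omega)]
    norm_cast
    apply congrArg
    rw [Nat.Partition.distincts, Finset.filter_filter]
    apply Finset.filter_congr
    intro p _
    constructor
    · rintro ⟨hnd, hm1, hm2⟩
      refine ⟨hnd, fun j hj => ?_⟩
      have hj1 := p.parts_pos hj
      have hj2 : j ≤ n - (2*m-1) := by
        have := Multiset.le_sum_of_mem hj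
        rw [p.parts_sum] at this
        exact this
      simp only [Finset.mem_erase, Finset.mem_Icc]
      refine ⟨fun hc => hm2 (hc ▸ hj), fun hc => hm1 (hc ▸ hj), by omega, by omega⟩
    · rintro ⟨hnd, hsub⟩
      refine ⟨hnd, fun hc => ?_, fun hc => ?_⟩
      · have := hsub m hc
        simp only [Finset.mem_erase, Finset.mem_Icc] at this
        omega
      · have := hsub (m-1) hc
        simp only [Finset.mem_erase, Finset.mem_Icc] at this
        omega
  · rw [PowerSeries.coeff_X_pow_mul', if_neg h]
    have : ((Nat.Partition.distincts n).filter
        (fun p => m ∈ p.parts ∧ (m-1) ∈ p.parts)) = ∅ := by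
      apply Finset.filter_eq_empty_iff.2
      rintro p hp ⟨h1, h2⟩
      have hnd := mem_distincts.1 hp
      have h3 : (m-1) ∈ p.parts.erase m := (Multiset.mem_erase_of_ne (by omega)).2 h2
      have h4 := Multiset.le_sum_of_mem h3
      have h5 : p.parts.sum = m + (p.parts.erase m).sum := by
        rw [← Multiset.sum_cons, Multiset.cons_erase h1]
      rw [p.parts_sum] at h5
      omega
    rw [this]
    simp

theorem countA_coeff (n m : ℕ) (hm : 3 ≤ m) (hmn : m ≤ n + 1) :
    ((#((Nat.Partition.distincts n).filter
        (fun p => m ∈ p.parts ∧ (m-1) ∉ p.parts ∧ (m-2) ∉ p.parts)) : ℕ) : ℚ)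
    = coeff n ((X:ℚ⟦X⟧)^m
        * ∏ k ∈ (((Finset.Icc 1 (n+3)).erase m).erase (m-1)).erase (m-2), (1 + X^k)) := by
  by_cases h : m ≤ n
  · rw [stepA n m hm h, PowerSeries.coeff_X_pow_mul', if_pos h,
      B3Aux.coeff_prod_one_add _ _ (fun i hi => by
        have h1 := Finset.mem_of_mem_erase hi
        have h2 := Finset.mem_of_mem_erase h1
        have h3 := Finset.mem_of_mem_erase h2
        have := (Finset.mem_Icc.1 h3).1
        omega)]
    norm_cast
    apply congrArg
    rw [Nat.Partition.distincts, Finset.filter_filter]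
    apply Finset.filter_congr
    intro p _
    constructor
    · rintro ⟨hnd, hm1, hm2, hm3⟩
      refine ⟨hnd, fun j hj => ?_⟩
      have hj1 := p.parts_pos hj
      have hj2 : j ≤ n - m := by
        have := Multiset.le_sum_of_mem hj
        rw [p.parts_sum] at this
        exact this
      simp only [Finset.mem_erase, Finset.mem_Icc]
      refine ⟨fun hc => hm3 (hc ▸ hj), fun hc => hm2 (hc ▸ hj),
        fun hc => hm1 (hc ▸ hj), by omega, by omega⟩
    · rintro ⟨hnd, hsub⟩
      refine ⟨hnd, fun hc => ?_, fun hc => ?_, fun hc => ?_⟩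
      · have := hsub m hc
        simp only [Finset.mem_erase, Finset.mem_Icc] at this
        omega
      · have := hsub (m-1) hc
        simp only [Finset.mem_erase, Finset.mem_Icc] at this
        omega
      · have := hsub (m-2) hc
        simp only [Finset.mem_erase, Finset.mem_Icc] at this
        omega
  · rw [PowerSeries.coeff_X_pow_mul', if_neg h]
    have : ((Nat.Partition.distincts n).filter
        (fun p => m ∈ p.parts ∧ (m-1) ∉ p.parts ∧ (m-2) ∉ p.parts)) = ∅ := by
      apply Finset.filter_eq_empty_iff.2
      rintro p hp ⟨h1, -⟩
      have h4 := Multiset.le_sum_of_mem h1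
      rw [p.parts_sum] at h4
      omega
    rw [this]
    simp

theorem b3_swap (n : ℕ) :
    b3 n = (∑ m ∈ Finset.Icc 2 (n+1),
        #((Nat.Partition.distincts n).filter (fun p => m ∈ p.parts ∧ (m-1) ∈ p.parts)))
      + ∑ m ∈ Finset.Icc 3 (n+1),
        #((Nat.Partition.distincts n).filter
          (fun p => m ∈ p.parts ∧ (m-1) ∉ p.parts ∧ (m-2) ∉ p.parts)) := by
  unfold b3
  have key : ∀ p ∈ Nat.Partition.distincts n, hookCount p.parts 3
      = (∑ m ∈ Finset.Icc 2 (n+1), if m ∈ p.parts ∧ (m-1) ∈ p.parts then 1 else 0)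
        + ∑ m ∈ Finset.Icc 3 (n+1),
            if m ∈ p.parts ∧ (m-1) ∉ p.parts ∧ (m-2) ∉ p.parts then 1 else 0 := by
    intro p hp
    have hnd := mem_distincts.1 hp
    have hpos : ∀ x ∈ p.parts, 0 < x := fun x hx => p.parts_pos hx
    rw [B3Aux2.hook3 hnd hpos]
    congr 1
    · rw [← Finset.card_filter]
      apply congrArg
      ext x
      simp only [Finset.mem_filter, Multiset.mem_toFinset, Finset.mem_Icc]
      constructor
      · rintro ⟨hx, hx1⟩
        have h1 := p.parts_pos hx1
        have h2 := Multiset.le_sum_of_mem hx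
        rw [p.parts_sum] at h2
        exact ⟨⟨by omega, by omega⟩, hx, hx1⟩
      · rintro ⟨-, hx, hx1⟩
        exact ⟨hx, hx1⟩
    · rw [← Finset.card_filter]
      apply congrArg
      ext x
      simp only [Finset.mem_filter, Multiset.mem_toFinset, Finset.mem_Icc]
      constructor
      · rintro ⟨hx, hx0, hx1, hx2⟩
        have h2 := Multiset.le_sum_of_mem hx
        rw [p.parts_sum] at h2
        exact ⟨⟨by omega, by omega⟩, hx, hx1, hx2⟩
      · rintro ⟨⟨h3, -⟩, hx, hx1, hx2⟩
        exact ⟨hx, h3, hx1, hx2⟩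
  rw [Finset.sum_congr rfl key, Finset.sum_add_distrib]
  congr 1
  · rw [Finset.sum_comm]
    apply Finset.sum_congr rfl
    intro m _
    rw [Finset.card_filter]
  · rw [Finset.sum_comm]
    apply Finset.sum_congr rfl
    intro m _
    rw [Finset.card_filter]

end B3Aux4

end B3AuxAll

open PowerSeries in
theorem b3_gen_fun :
    PowerSeries.mk (fun n => (b3 n : ℚ)) =
      prodOnePlusFrom 1 * lambertSum
        - (X : ℚ⟦X⟧) ^ 2 * (1 - (X : ℚ⟦X⟧) ^ 2)⁻¹ * prodOnePlusFrom 3 := by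
  ext n
  rw [coeff_mk]
  rcases Nat.eq_zero_or_pos n with rfl | hn
  · -- n = 0
    have hb : b3 0 = 0 := by
      unfold b3
      apply Finset.sum_eq_zero
      intro p _
      have h0 : p.parts = 0 := p.partition_zero_parts
      rw [hookCount, h0]
      simp
    rw [hb]
    rw [map_sub, coeff_zero_eq_constantCoeff, map_mul, map_mul, map_mul]
    have hL : constantCoeff lambertSum = 0 := by
      rw [← coeff_zero_eq_constantCoeff, lambertSum, coeff_mk,
        show Finset.Icc 2 (0+1) = ∅ from rfl]
      simp
    have hX : constantCoeff ((X:ℚ⟦X⟧)^2) = 0 := by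
      rw [map_pow, constantCoeff_X]
      norm_num
    rw [hL, hX]
    norm_num
  · rw [B3Aux3.coeff_rhs n hn, B3Aux4.b3_swap n]
    push_cast
    congr 1
    · apply Finset.sum_congr rfl
      intro m hm
      have h := Finset.mem_Icc.1 hm
      exact B3Aux4.countB_coeff n m h.1 h.2
    · apply Finset.sum_congr rfl
      intro m hm
      have h := Finset.mem_Icc.1 hm
      exact B3Aux4.countA_coeff n m h.1 h.2
end

section
/- For every integer n ≥ 0, b₁(n) − a₁(n) = c(n), where c(n) is the number of partitions of n in which exactly one part size occurs exactly three times and every other part size occurs exactly once. -/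
/-- `a₁(n)`: the total number of cells of hook length 1 summed over all partitions of `n`
into odd parts. -/
def a1 (n : ℕ) : ℕ :=
  ∑ π ∈ Nat.Partition.odds n, hookCount π.parts 1

/-- `b₁(n)`: the total number of cells of hook length 1 summed over all partitions of `n`
into distinct parts. -/
def b1 (n : ℕ) : ℕ :=
  ∑ π ∈ Nat.Partition.distincts n, hookCount π.parts 1

/-- `c(n)`: the number of partitions of `n` in which exactly one part size occurs exactly
three times while every other part size occurs exactly once. -/
def cBeck (n : ℕ) : ℕ :=
  ((Finset.univ : Finset (Nat.Partition n)).filter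
    (fun π => ∃ a ∈ π.parts.toFinset, π.parts.count a = 3 ∧
      ∀ b ∈ π.parts.toFinset, b ≠ a → π.parts.count b = 1)).card


open PowerSeries

namespace Theorems100

noncomputable section

variable {α : Type*}

open Finset

open scoped Classical

/-- The partial product for the generating function for odd partitions.
TODO: As `m` tends to infinity, this converges (in the `X`-adic topology).

If `m` is sufficiently large, the `i`th coefficient gives the number of odd partitions of the
natural number `i`: proved in `oddGF_prop`.
It is stated for an arbitrary field `α`, though it usually suffices to use `ℚ` or `ℝ`.
-/
def partialOddGF (m : ℕ) [Field α] :=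
  ∏ i ∈ range m, (1 - (X : PowerSeries α) ^ (2 * i + 1))⁻¹

/-- The partial product for the generating function for distinct partitions.
TODO: As `m` tends to infinity, this converges (in the `X`-adic topology).

If `m` is sufficiently large, the `i`th coefficient gives the number of distinct partitions of the
natural number `i`: proved in `distinctGF_prop`.
It is stated for an arbitrary commutative semiring `α`, though it usually suffices to use `ℕ`, `ℚ`
or `ℝ`.
-/
def partialDistinctGF (m : ℕ) [CommSemiring α] :=
  ∏ i ∈ range m, (1 + (X : PowerSeries α) ^ (i + 1))

open Finset.HasAntidiagonal

universe u
variable {ι : Type u}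

/-- A convenience constructor for the power series whose coefficients indicate a subset. -/
def indicatorSeries (α : Type*) [Semiring α] (s : Set ℕ) : PowerSeries α :=
  PowerSeries.mk fun n => if n ∈ s then 1 else 0

theorem coeff_indicator (s : Set ℕ) [Semiring α] (n : ℕ) :
    coeff (R := α) n (indicatorSeries _ s) = if n ∈ s then 1 else 0 :=
  coeff_mk _ _

theorem coeff_indicator_pos (s : Set ℕ) [Semiring α] (n : ℕ) (h : n ∈ s) :
    coeff (R := α) n (indicatorSeries _ s) = 1 := by rw [coeff_indicator, if_pos h]

theorem coeff_indicator_neg (s : Set ℕ) [Semiring α] (n : ℕ) (h : n ∉ s) :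
    coeff (R := α) n (indicatorSeries _ s) = 0 := by rw [coeff_indicator, if_neg h]

theorem constantCoeff_indicator (s : Set ℕ) [Semiring α] :
    constantCoeff (R := α) (indicatorSeries _ s) = if 0 ∈ s then 1 else 0 :=
  rfl

theorem two_series (i : ℕ) [Semiring α] :
    1 + (X : PowerSeries α) ^ i.succ = indicatorSeries α {0, i.succ} := by
  ext n
  simp only [coeff_indicator, coeff_one, coeff_X_pow, Set.mem_insert_iff, Set.mem_singleton_iff,
    map_add]
  cases' n with d
  · simp [(Nat.succ_ne_zero i).symm]
  · simp [Nat.succ_ne_zero d]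

theorem num_series' [Field α] (i : ℕ) :
    (1 - (X : PowerSeries α) ^ (i + 1))⁻¹ = indicatorSeries α {k | i + 1 ∣ k} := by
  rw [PowerSeries.inv_eq_iff_mul_eq_one]
  · ext n
    cases n with
    | zero => simp [mul_sub, zero_pow, constantCoeff_indicator]
    | succ n =>
      simp only [coeff_one, if_false, mul_sub, mul_one, coeff_indicator,
        LinearMap.map_sub, reduceCtorEq]
      simp_rw [coeff_mul, coeff_X_pow, coeff_indicator, @boole_mul _ _ _ _]
      erw [@sum_ite _ _ _ _ _ (fun _ => Classical.propDecidable _), sum_ite]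
      simp_rw [@filter_filter _ _ _ _ _, sum_const_zero, add_zero, sum_const, nsmul_eq_mul, mul_one,
        sub_eq_iff_eq_add, zero_add]
      symm
      split_ifs with h
      · suffices #{a ∈ antidiagonal (n + 1) | i + 1 ∣ a.fst ∧ a.snd = i + 1} = 1 by
          simp only [Set.mem_setOf_eq]; convert congr_arg ((↑) : ℕ → α) this; norm_cast
        rw [card_eq_one]
        cases' h with p hp
        refine ⟨((i + 1) * (p - 1), i + 1), ?_⟩
        ext ⟨a₁, a₂⟩
        simp only [mem_filter, Prod.mk.injEq, HasAntidiagonal.mem_antidiagonal, mem_singleton]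
        constructor
        · rintro ⟨a_left, ⟨a, rfl⟩, rfl⟩
          refine ⟨?_, rfl⟩
          rw [Nat.mul_sub_left_distrib, ← hp, ← a_left, mul_one, Nat.add_sub_cancel]
        · rintro ⟨rfl, rfl⟩
          match p with
          | 0 => rw [mul_zero] at hp; cases hp
          | p + 1 => rw [hp]; simp [mul_add]
      · suffices #{a ∈ antidiagonal (n + 1) | i + 1 ∣ a.fst ∧ a.snd = i + 1} = 0 by
          simp only [Set.mem_setOf_eq]; convert congr_arg ((↑) : ℕ → α) this; norm_cast
        rw [card_eq_zero]
        apply eq_empty_of_forall_notMem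
        simp only [Prod.forall, mem_filter, not_and, HasAntidiagonal.mem_antidiagonal]
        rintro _ h₁ h₂ ⟨a, rfl⟩ rfl
        apply h
        simp [← h₂]
  · simp [zero_pow]

def mkOdd : ℕ ↪ ℕ :=
  ⟨fun i => 2 * i + 1, fun x y h => by linarith⟩

-- The main workhorse of the partition theorem proof.
theorem partialGF_prop (α : Type*) [CommSemiring α] (n : ℕ) (s : Finset ℕ) (hs : ∀ i ∈ s, 0 < i)
    (c : ℕ → Set ℕ) (hc : ∀ i, i ∉ s → 0 ∈ c i) :
    #{p : n.Partition | (∀ j, p.parts.count j ∈ c j) ∧ ∀ j ∈ p.parts, j ∈ s} =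
      coeff (R := α) n (∏ i ∈ s, indicatorSeries α ((· * i) '' c i)) := by
  simp_rw [coeff_prod, coeff_indicator, prod_boole, sum_boole]
  apply congr_arg
  simp only [mem_univ, forall_true_left, not_and, not_forall, exists_prop,
    Set.mem_image, not_exists]
  set φ : (a : Nat.Partition n) →
    a ∈ filter (fun p ↦ (∀ (j : ℕ), Multiset.count j p.parts ∈ c j) ∧ ∀ j ∈ p.parts, j ∈ s) univ →
    ℕ →₀ ℕ := fun p _ => {
      toFun := fun i => Multiset.count i p.parts • i
      support := Finset.filter (fun i => i ≠ 0) p.parts.toFinset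
      mem_support_toFun := fun a => by
        simp only [smul_eq_mul, ne_eq, mul_eq_zero, Multiset.count_eq_zero]
        rw [not_or, not_not]
        simp only [Multiset.mem_toFinset, not_not, mem_filter] }
  refine Finset.card_bij φ ?_ ?_ ?_
  · intro a ha
    simp only [φ, not_forall, not_exists, not_and, exists_prop, mem_filter]
    rw [mem_finsuppAntidiag]
    dsimp only [ne_eq, smul_eq_mul, id_eq, eq_mpr_eq_cast, le_eq_subset, Finsupp.coe_mk]
    simp only [mem_univ, forall_true_left, not_and, not_forall, exists_prop,
      mem_filter, true_and] at ha
    refine ⟨⟨?_, fun i ↦ ?_⟩, fun i _ ↦ ⟨a.parts.count i, ha.1 i, rfl⟩⟩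
    · conv_rhs => simp [← a.parts_sum]
      rw [sum_multiset_count_of_subset _ s]
      · simp only [smul_eq_mul]
      · intro i
        simp only [Multiset.mem_toFinset, not_not, mem_filter]
        apply ha.2
    · simp only [ne_eq, Multiset.mem_toFinset, not_not, mem_filter, and_imp]
      exact fun hi _ ↦ ha.2 i hi
  · intro p₁ hp₁ p₂ hp₂ h
    apply Nat.Partition.ext
    simp only [true_and, mem_univ, mem_filter] at hp₁ hp₂
    ext i
    simp only [φ, ne_eq, Multiset.mem_toFinset, not_not, smul_eq_mul, Finsupp.mk.injEq] at h
    by_cases hi : i = 0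
    · rw [hi]
      rw [Multiset.count_eq_zero_of_notMem]
      · rw [Multiset.count_eq_zero_of_notMem]
        intro a; exact Nat.lt_irrefl 0 (hs 0 (hp₂.2 0 a))
      intro a; exact Nat.lt_irrefl 0 (hs 0 (hp₁.2 0 a))
    · rw [← mul_left_inj' hi]
      rw [funext_iff] at h
      exact h.2 i
  · simp only [φ, mem_filter, mem_finsuppAntidiag, mem_univ, exists_prop, true_and, and_assoc]
    rintro f ⟨hf, hf₃, hf₄⟩
    have hf' : f ∈ finsuppAntidiag s n := mem_finsuppAntidiag.mpr ⟨hf, hf₃⟩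
    simp only [mem_finsuppAntidiag] at hf'
    refine ⟨⟨∑ i ∈ s, Multiset.replicate (f i / i) i, ?_, ?_⟩, ?_, ?_, ?_⟩
    · intro i hi
      simp only [exists_prop, Multiset.mem_sum, mem_map, Function.Embedding.coeFn_mk] at hi
      rcases hi with ⟨t, ht, z⟩
      apply hs
      rwa [Multiset.eq_of_mem_replicate z]
    · simp_rw [Multiset.sum_sum, Multiset.sum_replicate, Nat.nsmul_eq_mul]
      rw [← hf'.1]
      refine sum_congr rfl fun i hi => Nat.div_mul_cancel ?_
      rcases hf₄ i hi with ⟨w, _, hw₂⟩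
      rw [← hw₂]
      exact dvd_mul_left _ _
    · intro i
      simp_rw [Multiset.count_sum', Multiset.count_replicate, sum_ite_eq']
      split_ifs with h
      · rcases hf₄ i h with ⟨w, hw₁, hw₂⟩
        rwa [← hw₂, Nat.mul_div_cancel _ (hs i h)]
      · exact hc _ h
    · intro i hi
      rw [Multiset.mem_sum] at hi
      rcases hi with ⟨j, hj₁, hj₂⟩
      rwa [Multiset.eq_of_mem_replicate hj₂]
    · ext i
      simp_rw [Multiset.count_sum', Multiset.count_replicate, sum_ite_eq']
      simp only [ne_eq, Multiset.mem_toFinset, not_not, smul_eq_mul, ite_mul,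
        zero_mul, Finsupp.coe_mk]
      split_ifs with h
      · apply Nat.div_mul_cancel
        rcases hf₄ i h with ⟨w, _, hw₂⟩
        apply Dvd.intro_left _ hw₂
      · apply symm
        rw [← Finsupp.notMem_support_iff]
        exact notMem_mono hf'.2 h

theorem partialOddGF_prop [Field α] (n m : ℕ) :
    #{p : n.Partition | ∀ j ∈ p.parts, j ∈ (range m).map mkOdd} = coeff (R := α) n (partialOddGF m) := by
  rw [partialOddGF]
  convert partialGF_prop α n
    ((range m).map mkOdd) _ (fun _ => Set.univ) (fun _ _ => trivial) using 2
  · congr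
    simp only [true_and, forall_const, Set.mem_univ]
  · rw [Finset.prod_map]
    simp_rw [num_series']
    congr! 2 with x
    ext k
    constructor
    · rintro ⟨p, rfl⟩
      refine ⟨p, ⟨⟩, ?_⟩
      apply mul_comm
    rintro ⟨a_w, -, rfl⟩
    apply Dvd.intro_left a_w rfl
  · intro i
    rw [mem_map]
    rintro ⟨a, -, rfl⟩
    exact Nat.succ_pos _

/-- If m is big enough, the partial product's coefficient counts the number of odd partitions -/
theorem oddGF_prop [Field α] (n m : ℕ) (h : n < m * 2) :
    #(Nat.Partition.odds n) = coeff (R := α) n (partialOddGF m) := by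
  rw [← partialOddGF_prop, Nat.Partition.odds, Nat.Partition.restricted]
  congr with p
  apply forall₂_congr
  intro i hi
  have hin : i ≤ n := by
    simpa [p.parts_sum] using Multiset.single_le_sum (fun _ _ => Nat.zero_le _) _ hi
  simp only [mkOdd, exists_prop, mem_range, Function.Embedding.coeFn_mk, mem_map]
  constructor
  · intro hi₂
    have := Nat.mod_add_div i 2
    rw [Nat.not_even_iff] at hi₂
    rw [hi₂, add_comm] at this
    refine ⟨i / 2, ?_, this⟩
    rw [Nat.div_lt_iff_lt_mul zero_lt_two]
    exact lt_of_le_of_lt hin h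
  · rintro ⟨a, -, rfl⟩
    rw [even_iff_two_dvd]
    apply Nat.two_not_dvd_two_mul_add_one

theorem partialDistinctGF_prop [CommSemiring α] (n m : ℕ) :
    #{p : n.Partition |
        p.parts.Nodup ∧ ∀ j ∈ p.parts, j ∈ (range m).map ⟨Nat.succ, Nat.succ_injective⟩} =
      coeff (R := α) n (partialDistinctGF m) := by
  rw [partialDistinctGF]
  convert partialGF_prop α n
    ((range m).map ⟨Nat.succ, Nat.succ_injective⟩) _ (fun _ => {0, 1}) (fun _ _ => Or.inl rfl)
    using 2
  · congr! with p
    rw [Multiset.nodup_iff_count_le_one]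
    congr! 1 with i
    rcases Multiset.count i p.parts with (_ | _ | ms) <;> simp
  · simp_rw [Finset.prod_map, two_series]
    congr with i
    simp [Set.image_pair]
  · simp only [mem_map, Function.Embedding.coeFn_mk]
    rintro i ⟨_, _, rfl⟩
    apply Nat.succ_pos

/-- If m is big enough, the partial product's coefficient counts the number of distinct partitions
-/
theorem distinctGF_prop [CommSemiring α] (n m : ℕ) (h : n < m + 1) :
    #(Nat.Partition.distincts n) = coeff (R := α) n (partialDistinctGF m) := by
  rw [← partialDistinctGF_prop, Nat.Partition.distincts]
  congr with p
  apply (and_iff_left _).symm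
  intro i hi
  have : i ≤ n := by
    simpa [p.parts_sum] using Multiset.single_le_sum (fun _ _ => Nat.zero_le _) _ hi
  simp only [mkOdd, exists_prop, mem_range, Function.Embedding.coeFn_mk, mem_map]
  refine ⟨i - 1, ?_, Nat.succ_pred_eq_of_pos (p.parts_pos hi)⟩
  rw [tsub_lt_iff_right (Nat.one_le_iff_ne_zero.mpr (p.parts_pos hi).ne')]
  exact lt_of_le_of_lt this h

/-- The key proof idea for the partition theorem, showing that the generating functions for both
sequences are ultimately the same (since the factor converges to 0 as m tends to infinity).
It's enough to not take the limit though, and just consider large enough `m`.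
-/
theorem same_gf [Field α] (m : ℕ) :
    (partialOddGF m * (range m).prod fun i => 1 - (X : PowerSeries α) ^ (m + i + 1)) =
      partialDistinctGF m := by
  rw [partialOddGF, partialDistinctGF]
  induction' m with m ih
  · simp
  set! π₀ : PowerSeries α := ∏ i ∈ range m, (1 - X ^ (m + 1 + i + 1)) with hπ₀
  set! π₁ : PowerSeries α := ∏ i ∈ range m, (1 - X ^ (2 * i + 1))⁻¹ with hπ₁
  set! π₂ : PowerSeries α := ∏ i ∈ range m, (1 - X ^ (m + i + 1)) with hπ₂
  set! π₃ : PowerSeries α := ∏ i ∈ range m, (1 + X ^ (i + 1)) with hπ₃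
  rw [← hπ₃] at ih
  have h : constantCoeff (R := α) (1 - X ^ (2 * m + 1)) ≠ 0 := by
    rw [RingHom.map_sub, RingHom.map_pow, constantCoeff_one, constantCoeff_X,
      zero_pow (2 * m).succ_ne_zero, sub_zero]
    exact one_ne_zero
  calc
    (∏ i ∈ range (m + 1), (1 - X ^ (2 * i + 1))⁻¹) *
          ∏ i ∈ range (m + 1), (1 - X ^ (m + 1 + i + 1)) =
        π₁ * (1 - X ^ (2 * m + 1))⁻¹ * (π₀ * (1 - X ^ (m + 1 + m + 1))) := by
      rw [prod_range_succ _ m, ← hπ₁, prod_range_succ _ m, ← hπ₀]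
    _ = π₁ * (1 - X ^ (2 * m + 1))⁻¹ * (π₀ * ((1 + X ^ (m + 1)) * (1 - X ^ (m + 1)))) := by
      rw [← sq_sub_sq, one_pow, add_assoc _ m 1, ← two_mul (m + 1), pow_mul']
    _ = π₀ * (1 - X ^ (m + 1)) * (1 - X ^ (2 * m + 1))⁻¹ * (π₁ * (1 + X ^ (m + 1))) := by ring
    _ =
        (∏ i ∈ range (m + 1), (1 - X ^ (m + 1 + i))) * (1 - X ^ (2 * m + 1))⁻¹ *
          (π₁ * (1 + X ^ (m + 1))) := by
      rw [prod_range_succ', add_zero, hπ₀]; simp_rw [← add_assoc]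
    _ = π₂ * (1 - X ^ (m + 1 + m)) * (1 - X ^ (2 * m + 1))⁻¹ * (π₁ * (1 + X ^ (m + 1))) := by
      rw [add_right_comm, hπ₂, ← prod_range_succ]; simp_rw [add_right_comm]
    _ = π₂ * (1 - X ^ (2 * m + 1)) * (1 - X ^ (2 * m + 1))⁻¹ * (π₁ * (1 + X ^ (m + 1))) := by
      rw [two_mul, add_right_comm _ m 1]
    _ = (1 - X ^ (2 * m + 1)) * (1 - X ^ (2 * m + 1))⁻¹ * π₂ * (π₁ * (1 + X ^ (m + 1))) := by ring
    _ = π₂ * (π₁ * (1 + X ^ (m + 1))) := by rw [PowerSeries.mul_inv_cancel _ h, one_mul]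
    _ = π₁ * π₂ * (1 + X ^ (m + 1)) := by ring
    _ = π₃ * (1 + X ^ (m + 1)) := by rw [ih]
    _ = _ := by rw [prod_range_succ]

theorem same_coeffs [Field α] (m n : ℕ) (h : n ≤ m) :
    coeff (R := α) n (partialOddGF m) = coeff (R := α) n (partialDistinctGF m) := by
  rw [← same_gf, coeff_mul_prod_one_sub_of_lt_order]
  rintro i -
  rw [order_X_pow]
  exact mod_cast Nat.lt_succ_of_le (le_add_right h)

theorem partition_theorem (n : ℕ) : #(Nat.Partition.odds n) = #(Nat.Partition.distincts n) := by
  suffices (#(Nat.Partition.odds n) : ℚ) = #(Nat.Partition.distincts n) from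
    mod_cast this
  rw [distinctGF_prop n (n + 1) (by linarith)]
  rw [oddGF_prop n (n + 1) (by linarith)]
  apply same_coeffs (n + 1) n n.le_succ

end

end Theorems100

section Hook

variable (S : Multiset ℕ) (hpos : ∀ p ∈ S, 0 < p)

lemma conjPart_anti {S : Multiset ℕ} : Antitone (conjPart S) := by
  intro j j' h
  exact Multiset.card_le_card (Multiset.monotone_filter_right S (fun p hp => le_trans h hp))

lemma card_le_sum {S : Multiset ℕ} (hpos : ∀ p ∈ S, 0 < p) : Multiset.card S ≤ S.sum := by
  induction S using Multiset.induction with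
  | empty => simp
  | cons a s ih =>
    simp only [Multiset.card_cons, Multiset.sum_cons]
    have ha := hpos a (Multiset.mem_cons_self a s)
    have := ih (fun p hp => hpos p (Multiset.mem_cons_of_mem hp))
    omega

lemma conjPart_le_sum {S : Multiset ℕ} (hpos : ∀ p ∈ S, 0 < p) (j : ℕ) :
    conjPart S j ≤ S.sum :=
  le_trans (Multiset.card_le_card (Multiset.filter_le _ S)) (card_le_sum hpos)

lemma mem_le_sum {S : Multiset ℕ} {p : ℕ} (hp : p ∈ S) : p ≤ S.sum :=
  Multiset.single_le_sum (fun x _ => Nat.zero_le x) p hp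

lemma conjPart_succ (S : Multiset ℕ) (j : ℕ) :
    conjPart S j = S.count j + conjPart S (j + 1) := by
  unfold conjPart
  have h1 : S.filter (fun p => j + 1 ≤ p) + S.filter (fun p => p = j)
      = S.filter (fun p => j ≤ p) + S.filter (fun p => (j + 1 ≤ p) ∧ p = j) := by
    rw [Multiset.filter_add_filter]
    congr 1
    apply Multiset.filter_congr
    intro x _
    constructor
    · rintro (h | h) <;> omega
    · intro h
      omega
  have h2 : S.filter (fun p => (j + 1 ≤ p) ∧ p = j) = 0 := by
    rw [Multiset.filter_eq_nil]
    intro x _ h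
    omega
  have h3 : S.filter (fun p => p = j) = Multiset.replicate (S.count j) j := by
    simpa using Multiset.filter_eq' S j
  rw [h2, h3] at h1
  have h4 := congrArg Multiset.card h1
  simp only [Multiset.card_add, Multiset.card_replicate, add_zero] at h4
  omega

lemma conjPart_pos_bound {S : Multiset ℕ} {j : ℕ} (hj : 1 ≤ j) (h : 1 ≤ conjPart S j) :
    j ≤ S.sum := by
  obtain ⟨p, hp⟩ := Multiset.card_pos_iff_exists_mem.mp h
  rw [Multiset.mem_filter] at hp
  exact le_trans hp.2 (mem_le_sum hp.1)

lemma downset_eq_Icc (T : Finset ℕ)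
    (hT : ∀ j ∈ T, 1 ≤ j ∧ ∀ j', 1 ≤ j' → j' ≤ j → j' ∈ T) :
    T = Finset.Icc 1 T.card := by
  rcases T.eq_empty_or_nonempty with h | h
  · simp [h]
  · have hm : T.max' h ∈ T := T.max'_mem h
    have key : T = Finset.Icc 1 (T.max' h) := by
      apply Finset.ext
      intro j
      simp only [Finset.mem_Icc]
      constructor
      · intro hj
        exact ⟨(hT j hj).1, T.le_max' j hj⟩
      · intro ⟨h1, h2⟩
        exact (hT _ hm).2 j h1 h2
    have hcard : T.card = T.max' h := by
      have := congrArg Finset.card key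
      rw [Nat.card_Icc] at this
      omega
    conv_lhs => rw [key]
    rw [hcard]

/-- Key: for `i ≥ 1`, `j ≥ 1`: `j ≤ rowPart S i ↔ i ≤ conjPart S j`. -/
lemma le_rowPart_iff {S : Multiset ℕ} {i j : ℕ} (hi : 1 ≤ i) (hj : 1 ≤ j) :
    j ≤ rowPart S i ↔ i ≤ conjPart S j := by
  set T := (Finset.Icc 1 S.sum).filter (fun j => i ≤ conjPart S j) with hTdef
  have hdown : ∀ j ∈ T, 1 ≤ j ∧ ∀ j', 1 ≤ j' → j' ≤ j → j' ∈ T := by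
    intro a ha
    rw [hTdef, Finset.mem_filter, Finset.mem_Icc] at ha
    refine ⟨ha.1.1, fun j' h1 h2 => ?_⟩
    rw [hTdef, Finset.mem_filter, Finset.mem_Icc]
    exact ⟨⟨h1, le_trans h2 ha.1.2⟩, le_trans ha.2 (conjPart_anti h2)⟩
  have hIcc := downset_eq_Icc T hdown
  have hmem : ∀ a, a ∈ T ↔ (1 ≤ a ∧ a ≤ T.card) := by
    intro a
    rw [hIcc]
    simp [Finset.mem_Icc]
  have hrow : rowPart S i = T.card := rfl
  constructor
  · intro h
    have : j ∈ T := (hmem j).mpr ⟨hj, by rwa [hrow] at h⟩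
    rw [hTdef, Finset.mem_filter] at this
    exact this.2
  · intro h
    have hjn : j ≤ S.sum := conjPart_pos_bound hj (le_trans hi h)
    have : j ∈ T := by
      rw [hTdef, Finset.mem_filter, Finset.mem_Icc]
      exact ⟨⟨hj, hjn⟩, h⟩
    rw [hmem] at this
    rw [hrow]
    exact this.2

lemma hookCount_one {S : Multiset ℕ} (hpos : ∀ p ∈ S, 0 < p) :
    hookCount S 1 = S.toFinset.card := by
  unfold hookCount
  apply Finset.card_bij (fun c _ => c.2)
  · -- maps to toFinset
    intro c hc
    rw [Finset.mem_filter, Finset.mem_product, Finset.mem_Icc, Finset.mem_Icc] at hc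
    obtain ⟨⟨⟨hi1, hin⟩, hj1, hjn⟩, hle, heq⟩ := hc
    have h1 : c.1 ≤ conjPart S c.2 := (le_rowPart_iff hi1 hj1).mp hle
    have h2 : c.2 ≤ rowPart S c.1 := hle
    have hrow : rowPart S c.1 = c.2 := by omega
    have hconj : conjPart S c.2 = c.1 := by omega
    -- show c.2 ∈ S
    have hlt : conjPart S (c.2 + 1) < conjPart S c.2 := by
      by_contra hcon
      push_neg at hcon
      have : c.2 + 1 ≤ rowPart S c.1 := (le_rowPart_iff hi1 (by omega)).mpr (by omega)
      omega
    have := conjPart_succ S c.2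
    have : 0 < S.count c.2 := by omega
    rw [Multiset.mem_toFinset]
    exact Multiset.count_pos.mp this
  · -- injective
    intro c hc c' hc' h
    rw [Finset.mem_filter, Finset.mem_product, Finset.mem_Icc, Finset.mem_Icc] at hc hc'
    obtain ⟨⟨⟨hi1, _⟩, hj1, _⟩, hle, heq⟩ := hc
    obtain ⟨⟨⟨hi1', _⟩, hj1', _⟩, hle', heq'⟩ := hc'
    have h1 : c.1 ≤ conjPart S c.2 := (le_rowPart_iff hi1 hj1).mp hle
    have h1' : c'.1 ≤ conjPart S c'.2 := (le_rowPart_iff hi1' hj1').mp hle'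
    have hconj : conjPart S c.2 = c.1 := by omega
    have hconj' : conjPart S c'.2 = c'.1 := by omega
    have : c.1 = c'.1 := by rw [← hconj, ← hconj', h]
    exact Prod.ext this h
  · -- surjective
    intro j hj
    rw [Multiset.mem_toFinset] at hj
    have hj1 : 1 ≤ j := hpos j hj
    have hjn : j ≤ S.sum := mem_le_sum hj
    set i := conjPart S j with hi
    have hi1 : 1 ≤ i := by
      have : 0 < S.count j := Multiset.count_pos.mpr hj
      have := conjPart_succ S j
      omega
    have hin : i ≤ S.sum := conjPart_le_sum hpos j
    have hcount : 0 < S.count j := Multiset.count_pos.mpr hj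
    have hsucc := conjPart_succ S j
    have hrowge : j ≤ rowPart S i := (le_rowPart_iff hi1 hj1).mpr le_rfl
    have hrowle : rowPart S i ≤ j := by
      by_contra hcon
      push_neg at hcon
      have : i ≤ conjPart S (j + 1) := (le_rowPart_iff hi1 (by omega)).mp (by omega)
      omega
    refine ⟨(i, j), ?_, rfl⟩
    rw [Finset.mem_filter, Finset.mem_product, Finset.mem_Icc, Finset.mem_Icc]
    refine ⟨⟨⟨hi1, hin⟩, hj1, hjn⟩, by simp; omega, by simp; omega⟩

end Hook


namespace BeckAux

open Nat.Partition

def D (m : ℕ) : ℕ := (Nat.Partition.distincts m).card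
def O (m : ℕ) : ℕ := (Nat.Partition.odds m).card
def E (k m : ℕ) : ℕ := ((Nat.Partition.distincts m).filter (fun π => k ∉ π.parts)).card
def F (k m : ℕ) : ℕ := ((Nat.Partition.distincts m).filter (fun π => k ∈ π.parts)).card
def AO (k m : ℕ) : ℕ := ((Nat.Partition.odds m).filter (fun π => k ∈ π.parts)).card

/-- Remove one copy of part `k`. -/
def removeOne {m : ℕ} (k : ℕ) (π : Nat.Partition m) (h : k ∈ π.parts) :
    Nat.Partition (m - k) where
  parts := π.parts.erase k
  parts_pos := fun hi => π.parts_pos (Multiset.mem_of_mem_erase hi)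
  parts_sum := by
    have hcons := Multiset.cons_erase h
    have := congrArg Multiset.sum hcons
    rw [Multiset.sum_cons, π.parts_sum] at this
    omega

/-- Add one copy of part `k`. -/
def addOne {m : ℕ} (k : ℕ) (hk : 0 < k) (hkm : k ≤ m) (σ : Nat.Partition (m - k)) :
    Nat.Partition m where
  parts := k ::ₘ σ.parts
  parts_pos := fun hi => by
    rcases Multiset.mem_cons.mp hi with h | h
    · omega
    · exact σ.parts_pos h
  parts_sum := by
    rw [Multiset.sum_cons, σ.parts_sum]
    omega

lemma D_eq (k m : ℕ) : D m = F k m + E k m := by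
  unfold D E F
  rw [← Finset.card_filter_add_card_filter_not (s := distincts m)
    (p := fun π => k ∈ π.parts)]

lemma F_eq_zero {k m : ℕ} (h : m < k) : F k m = 0 := by
  rw [F, Finset.card_eq_zero, Finset.filter_eq_empty_iff]
  intro π _ hk
  have := Multiset.single_le_sum (fun x _ => Nat.zero_le x) k hk
  rw [π.parts_sum] at this
  omega

lemma AO_eq_zero_of_lt {k m : ℕ} (h : m < k) : AO k m = 0 := by
  rw [AO, Finset.card_eq_zero, Finset.filter_eq_empty_iff]
  intro π _ hk
  have := Multiset.single_le_sum (fun x _ => Nat.zero_le x) k hk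
  rw [π.parts_sum] at this
  omega

lemma AO_eq_zero_of_even {k m : ℕ} (h : Even k) : AO k m = 0 := by
  rw [AO, Finset.card_eq_zero, Finset.filter_eq_empty_iff]
  intro π hπ hk
  rw [odds, restricted, Finset.mem_filter] at hπ
  exact hπ.2 k hk h

lemma F_eq {k m : ℕ} (hk : 1 ≤ k) (hkm : k ≤ m) : F k m = E k (m - k) := by
  unfold F E
  apply Finset.card_bij'
    (i := fun π hπ => removeOne k π (Finset.mem_filter.mp hπ).2)
    (j := fun σ _ => addOne k hk hkm σ)
  case hi =>
    intro π hπ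
    simp only [Finset.mem_filter, distincts, Finset.mem_univ, true_and] at hπ ⊢
    exact ⟨hπ.1.erase k, fun h => Multiset.Nodup.notMem_erase hπ.1 h⟩
  case hj =>
    intro σ hσ
    simp only [Finset.mem_filter, distincts, Finset.mem_univ, true_and] at hσ ⊢
    exact ⟨Multiset.Nodup.cons hσ.2 hσ.1, Multiset.mem_cons_self k _⟩
  case left_inv =>
    intro π hπ
    apply Nat.Partition.ext
    simp [addOne, removeOne, Multiset.cons_erase (Finset.mem_filter.mp hπ).2]
  case right_inv =>
    intro σ hσ
    apply Nat.Partition.ext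
    simp [addOne, removeOne, Multiset.erase_cons_head]

lemma AO_eq {k m : ℕ} (hk : ¬ Even k) (hkm : k ≤ m) : AO k m = O (m - k) := by
  have hk1 : 0 < k := by
    rcases Nat.eq_zero_or_pos k with h | h
    · exact absurd (h ▸ Even.zero) hk
    · exact h
  unfold AO O
  apply Finset.card_bij'
    (i := fun π hπ => removeOne k π (Finset.mem_filter.mp hπ).2)
    (j := fun σ _ => addOne k hk1 hkm σ)
  case hi =>
    intro π hπ
    simp only [Finset.mem_filter, odds, restricted, Finset.mem_univ, true_and] at hπ ⊢
    exact fun i hi => hπ.1 i (Multiset.mem_of_mem_erase hi)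
  case hj =>
    intro σ hσ
    simp only [Finset.mem_filter, odds, restricted, Finset.mem_univ, true_and] at hσ ⊢
    refine ⟨fun i hi => ?_, Multiset.mem_cons_self k _⟩
    rcases Multiset.mem_cons.mp hi with h | h
    · exact h ▸ hk
    · exact hσ i h
  case left_inv =>
    intro π hπ
    apply Nat.Partition.ext
    simp [addOne, removeOne, Multiset.cons_erase (Finset.mem_filter.mp hπ).2]
  case right_inv =>
    intro σ hσ
    apply Nat.Partition.ext
    simp [addOne, removeOne, Multiset.erase_cons_head]


def Q (k n : ℕ) : Finset (Nat.Partition n) :=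
  Finset.univ.filter (fun π => π.parts.count k = 3 ∧
    ∀ b ∈ π.parts.toFinset, b ≠ k → π.parts.count b = 1)

lemma sum_filter_eq (s : Multiset ℕ) (k : ℕ) :
    (s.filter (fun b => b = k)).sum = s.count k * k := by
  have h : s.filter (fun b => b = k) = Multiset.replicate (s.count k) k := by
    simpa using Multiset.filter_eq' s k
  rw [h, Multiset.sum_replicate, smul_eq_mul]

lemma sum_filter_ne (s : Multiset ℕ) (k : ℕ) :
    (s.filter (fun b => ¬ b = k)).sum + s.count k * k = s.sum := by
  have h := Multiset.filter_add_not (fun b => b = k) s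
  have := congrArg Multiset.sum h
  rw [Multiset.sum_add, sum_filter_eq] at this
  omega

lemma Q_card_eq_zero {k n : ℕ} (h : n < 3 * k) : (Q k n).card = 0 := by
  rw [Q, Finset.card_eq_zero, Finset.filter_eq_empty_iff]
  intro π _ hc
  have h1 := sum_filter_ne π.parts k
  rw [π.parts_sum, hc.1] at h1
  omega

/-- Remove the triple of `k`s. -/
def removeTriple {n : ℕ} (k : ℕ) (π : Nat.Partition n) (h3 : π.parts.count k = 3) :
    Nat.Partition (n - 3 * k) where
  parts := π.parts.filter (fun b => ¬ b = k)
  parts_pos := fun hi => π.parts_pos (Multiset.mem_of_mem_filter hi)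
  parts_sum := by
    have h1 := sum_filter_ne π.parts k
    rw [π.parts_sum, h3] at h1
    omega

/-- Add a triple of `k`s. -/
def addTriple {n : ℕ} (k : ℕ) (hk : 0 < k) (hkn : 3 * k ≤ n) (σ : Nat.Partition (n - 3 * k)) :
    Nat.Partition n where
  parts := Multiset.replicate 3 k + σ.parts
  parts_pos := fun hi => by
    rcases Multiset.mem_add.mp hi with h | h
    · rw [Multiset.eq_of_mem_replicate h]; omega
    · exact σ.parts_pos h
  parts_sum := by
    rw [Multiset.sum_add, Multiset.sum_replicate, σ.parts_sum, smul_eq_mul]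
    omega

lemma Q_card_eq {k n : ℕ} (hk : 1 ≤ k) (hkn : 3 * k ≤ n) :
    (Q k n).card = E k (n - 3 * k) := by
  unfold Q E
  apply Finset.card_bij'
    (i := fun π hπ => removeTriple k π (Finset.mem_filter.mp hπ).2.1)
    (j := fun σ _ => addTriple k hk hkn σ)
  case hi =>
    intro π hπ
    rw [Finset.mem_filter] at hπ
    obtain ⟨_, h3, h1⟩ := hπ
    rw [Finset.mem_filter]
    constructor
    · rw [distincts, Finset.mem_filter]
      refine ⟨Finset.mem_univ _, ?_⟩
      rw [Multiset.nodup_iff_count_le_one]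
      intro b
      show (removeTriple k π h3).parts.count b ≤ 1
      rw [removeTriple, Multiset.count_filter]
      by_cases hb : b = k
      · simp [hb]
      · rw [if_pos hb]
        by_cases hmem : b ∈ π.parts
        · rw [h1 b (Multiset.mem_toFinset.mpr hmem) hb]
        · rw [Multiset.count_eq_zero_of_notMem hmem]; omega
    · show k ∉ (removeTriple k π h3).parts
      rw [removeTriple]
      intro hmem
      exact (Multiset.of_mem_filter hmem) rfl
  case hj =>
    intro σ hσ
    rw [Finset.mem_filter] at hσ
    obtain ⟨hdist, hnotmem⟩ := hσ
    rw [distincts, Finset.mem_filter] at hdist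
    rw [Finset.mem_filter]
    refine ⟨Finset.mem_univ _, ?_, ?_⟩
    · show (addTriple k hk hkn σ).parts.count k = 3
      rw [addTriple, Multiset.count_add, Multiset.count_replicate,
        Multiset.count_eq_zero_of_notMem hnotmem]
      simp
    · intro b hb hbk
      show (addTriple k hk hkn σ).parts.count b = 1
      rw [addTriple] at hb ⊢
      rw [Multiset.count_add, Multiset.count_replicate, if_neg (fun h => hbk h.symm)]
      rw [Multiset.mem_toFinset, Multiset.mem_add] at hb
      rcases hb with h | h
      · exact absurd (Multiset.eq_of_mem_replicate h) hbk
      · rw [Multiset.count_eq_one_of_mem hdist.2 h]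
  case left_inv =>
    intro π hπ
    rw [Finset.mem_filter] at hπ
    apply Nat.Partition.ext
    show Multiset.replicate 3 k + π.parts.filter (fun b => ¬ b = k) = π.parts
    have h := Multiset.filter_add_not (fun b => b = k) π.parts
    have heq : π.parts.filter (fun b => b = k) = Multiset.replicate 3 k := by
      have := Multiset.filter_eq' π.parts k
      rw [hπ.2.1] at this
      simpa using this
    rw [← heq, h]
  case right_inv =>
    intro σ hσ
    rw [Finset.mem_filter] at hσ
    apply Nat.Partition.ext
    show (Multiset.replicate 3 k + σ.parts).filter (fun b => ¬ b = k) = σ.parts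
    rw [Multiset.filter_add]
    have h1 : (Multiset.replicate 3 k).filter (fun b => ¬ b = k) = 0 := by
      rw [Multiset.filter_eq_nil]
      intro a ha
      simp [Multiset.eq_of_mem_replicate ha]
    have h2 : σ.parts.filter (fun b => ¬ b = k) = σ.parts :=
      Multiset.filter_eq_self.mpr (fun a ha hak => hσ.2 (hak ▸ ha))
    rw [h1, h2, zero_add]

lemma cBeck_decomp (n : ℕ) :
    ((Finset.univ : Finset (Nat.Partition n)).filter
      (fun π => ∃ a ∈ π.parts.toFinset, π.parts.count a = 3 ∧
        ∀ b ∈ π.parts.toFinset, b ≠ a → π.parts.count b = 1)).card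
    = ∑ k ∈ Finset.Icc 1 n, (Q k n).card := by
  rw [← Finset.card_biUnion]
  · congr 1
    apply Finset.ext
    intro π
    simp only [Finset.mem_filter, Finset.mem_univ, true_and, Finset.mem_biUnion]
    constructor
    · rintro ⟨a, ha, h3, h1⟩
      rw [Multiset.mem_toFinset] at ha
      have ha1 : 1 ≤ a := π.parts_pos ha
      have han : a ≤ n := by
        have := Multiset.single_le_sum (fun x _ => Nat.zero_le x) a ha
        rw [π.parts_sum] at this
        omega
      exact ⟨a, Finset.mem_Icc.mpr ⟨ha1, han⟩, Finset.mem_filter.mpr ⟨Finset.mem_univ _, h3, h1⟩⟩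
    · rintro ⟨k, hk, hQ⟩
      rw [Q, Finset.mem_filter] at hQ
      refine ⟨k, ?_, hQ.2⟩
      rw [Multiset.mem_toFinset, ← Multiset.count_pos, hQ.2.1]
      omega
  · intro k _ k' _ hne
    simp only [Finset.disjoint_left]
    intro π hπ hπ'
    rw [Q, Finset.mem_filter] at hπ hπ'
    have hk : k ∈ π.parts.toFinset := by
      rw [Multiset.mem_toFinset, ← Multiset.count_pos, hπ.2.1]; omega
    have := hπ'.2.2 k hk hne
    rw [hπ.2.1] at this
    omega


end BeckAux

section Final

open Nat.Partition BeckAux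

lemma toFinset_eq_filter {n : ℕ} (π : Nat.Partition n) :
    π.parts.toFinset = (Finset.Icc 1 n).filter (fun k => k ∈ π.parts) := by
  apply Finset.ext
  intro k
  rw [Multiset.mem_toFinset, Finset.mem_filter, Finset.mem_Icc]
  constructor
  · intro h
    have h1 : 1 ≤ k := π.parts_pos h
    have h2 : k ≤ n := by
      have := Multiset.single_le_sum (fun x _ => Nat.zero_le x) k h
      rw [π.parts_sum] at this
      omega
    exact ⟨⟨h1, h2⟩, h⟩
  · exact fun h => h.2

lemma b1_eq (n : ℕ) : b1 n = ∑ k ∈ Finset.Icc 1 n, F k n := by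
  unfold b1
  have h1 : ∀ π ∈ distincts n, hookCount π.parts 1 = π.parts.toFinset.card := by
    intro π _
    exact hookCount_one (fun p hp => π.parts_pos hp)
  rw [Finset.sum_congr rfl h1]
  have h2 : ∀ π ∈ distincts n, π.parts.toFinset.card
      = ∑ k ∈ Finset.Icc 1 n, if k ∈ π.parts then 1 else 0 := by
    intro π _
    rw [toFinset_eq_filter, Finset.card_filter]
  rw [Finset.sum_congr rfl h2, Finset.sum_comm]
  apply Finset.sum_congr rfl
  intro k _
  rw [F, Finset.card_filter]

lemma a1_eq (n : ℕ) : a1 n = ∑ k ∈ Finset.Icc 1 n, AO k n := by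
  unfold a1
  have h1 : ∀ π ∈ odds n, hookCount π.parts 1 = π.parts.toFinset.card := by
    intro π _
    exact hookCount_one (fun p hp => π.parts_pos hp)
  rw [Finset.sum_congr rfl h1]
  have h2 : ∀ π ∈ odds n, π.parts.toFinset.card
      = ∑ k ∈ Finset.Icc 1 n, if k ∈ π.parts then 1 else 0 := by
    intro π _
    rw [toFinset_eq_filter, Finset.card_filter]
  rw [Finset.sum_congr rfl h2, Finset.sum_comm]
  apply Finset.sum_congr rfl
  intro k _
  rw [AO, Finset.card_filter]

lemma euler (m : ℕ) : O m = D m := Theorems100.partition_theorem m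

lemma claim1 {n k : ℕ} (hk : 1 ≤ k) (hkn : k ≤ n) :
    (F k n : ℤ) - ((Q k n).card : ℤ)
      = (D (n - k) : ℤ) - (if 2 * k ≤ n then (D (n - 2 * k) : ℤ) else 0) := by
  have hF : F k n = E k (n - k) := F_eq hk hkn
  have hD1 : D (n - k) = F k (n - k) + E k (n - k) := D_eq k (n - k)
  by_cases h2 : 2 * k ≤ n
  · have hF2 : F k (n - k) = E k (n - 2 * k) := by
      have := F_eq hk (show k ≤ n - k by omega)
      rwa [show n - k - k = n - 2 * k by omega] at this
    have hD2 : D (n - 2 * k) = F k (n - 2 * k) + E k (n - 2 * k) := D_eq k (n - 2 * k)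
    by_cases h3 : 3 * k ≤ n
    · have hF3 : F k (n - 2 * k) = E k (n - 3 * k) := by
        have := F_eq hk (show k ≤ n - 2 * k by omega)
        rwa [show n - 2 * k - k = n - 3 * k by omega] at this
      have hQ : (Q k n).card = E k (n - 3 * k) := Q_card_eq hk h3
      rw [if_pos h2]
      omega
    · have hF3 : F k (n - 2 * k) = 0 := F_eq_zero (by omega)
      have hQ : (Q k n).card = 0 := Q_card_eq_zero (by omega)
      rw [if_pos h2]
      omega
  · have hF2 : F k (n - k) = 0 := F_eq_zero (by omega)
    have hQ : (Q k n).card = 0 := Q_card_eq_zero (by omega)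
    rw [if_neg h2]
    omega

lemma claim2 (n : ℕ) :
    ∑ k ∈ Finset.Icc 1 n, (AO k n : ℤ)
      = ∑ k ∈ Finset.Icc 1 n, (if ¬ Even k then (D (n - k) : ℤ) else 0) := by
  apply Finset.sum_congr rfl
  intro k hk
  rw [Finset.mem_Icc] at hk
  by_cases he : Even k
  · rw [if_neg (by simpa using he), AO_eq_zero_of_even he]
    simp
  · rw [if_pos he, AO_eq he hk.2, euler]

lemma claim3 (n : ℕ) :
    ∑ k ∈ Finset.Icc 1 n, (D (n - k) : ℤ)
      = (∑ k ∈ Finset.Icc 1 n, if ¬ Even k then (D (n - k) : ℤ) else 0)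
        + ∑ k ∈ Finset.Icc 1 n, (if 2 * k ≤ n then (D (n - 2 * k) : ℤ) else 0) := by
  have hsplit : ∑ k ∈ Finset.Icc 1 n, (D (n - k) : ℤ)
      = (∑ k ∈ Finset.Icc 1 n, if ¬ Even k then (D (n - k) : ℤ) else 0)
        + ∑ k ∈ Finset.Icc 1 n, (if Even k then (D (n - k) : ℤ) else 0) := by
    rw [← Finset.sum_add_distrib]
    apply Finset.sum_congr rfl
    intro k _
    by_cases he : Even k <;> simp [he]
  rw [hsplit]
  congr 1
  rw [← Finset.sum_filter, ← Finset.sum_filter]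
  refine Finset.sum_nbij' (i := fun k => k / 2) (j := fun k => 2 * k) ?hi ?hj ?left_inv ?right_inv ?h
  case hi =>
    intro k hk
    simp only [Finset.mem_filter, Finset.mem_Icc] at hk ⊢
    obtain ⟨⟨h1, h2⟩, he⟩ := hk
    obtain ⟨j, hj⟩ := he
    omega
  case hj =>
    intro k hk
    simp only [Finset.mem_filter, Finset.mem_Icc] at hk ⊢
    refine ⟨⟨by omega, by omega⟩, ⟨k, by omega⟩⟩
  case left_inv =>
    intro k hk
    simp only [Finset.mem_filter, Finset.mem_Icc] at hk
    obtain ⟨_, j, hj⟩ := hk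
    show 2 * (k / 2) = k
    omega
  case right_inv =>
    intro k _
    show 2 * k / 2 = k
    omega
  case h =>
    intro k hk
    simp only [Finset.mem_filter, Finset.mem_Icc] at hk
    obtain ⟨_, j, hj⟩ := hk
    show (D (n - k) : ℤ) = (D (n - 2 * (k / 2)) : ℤ)
    congr 2
    omega

end Final

theorem beck_conjecture (n : ℕ) : (b1 n : ℤ) - (a1 n : ℤ) = cBeck n := by
  open BeckAux in
  have hb : (b1 n : ℤ) = ∑ k ∈ Finset.Icc 1 n, (F k n : ℤ) := by
    rw [b1_eq]; push_cast; ring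
  have ha : (a1 n : ℤ) = ∑ k ∈ Finset.Icc 1 n, (AO k n : ℤ) := by
    rw [a1_eq]; push_cast; ring
  have hc : (cBeck n : ℤ) = ∑ k ∈ Finset.Icc 1 n, ((Q k n).card : ℤ) := by
    rw [cBeck, cBeck_decomp]; push_cast; ring
  rw [hb, ha, hc]
  have key : ∑ k ∈ Finset.Icc 1 n, ((F k n : ℤ) - ((Q k n).card : ℤ))
      = ∑ k ∈ Finset.Icc 1 n, (AO k n : ℤ) := by
    have h1 : ∑ k ∈ Finset.Icc 1 n, ((F k n : ℤ) - ((Q k n).card : ℤ))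
        = ∑ k ∈ Finset.Icc 1 n,
          ((D (n - k) : ℤ) - (if 2 * k ≤ n then (D (n - 2 * k) : ℤ) else 0)) := by
      apply Finset.sum_congr rfl
      intro k hk
      rw [Finset.mem_Icc] at hk
      exact claim1 hk.1 hk.2
    rw [h1, Finset.sum_sub_distrib, claim3 n, claim2 n]
    ring
  rw [← key, Finset.sum_sub_distrib]
  ring
end
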